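/- arXiv:2008.05866 — 4 statements merged into one kernel-verified Lean document; each statement's English description precedes it below -/
import Mathlib

section
/- Let S be an η-sparse family of dyadic cubes in ℝⁿ (i.e., for each Q ∈ S there is a measurable subset E_Q ⊆ Q with |E_Q| ≥ η|Q|, and the sets E_Q are pairwise disjoint). Let σ be a locally integrable nonnegative weight, let R ∈ S, let k ∈ ℤ, and let F_k = {Q ∈ S : 2^k < σ_Q ≤ 2^{k+1}}, where σ_Q = (1/|Q|)∫_Q σ. Then ∑_{Q ∈ F_k, Q ⊆ R} σ(Q) ≤ C σ(R), where σ(Q) = ∫_Q σ and C depends only on η (not on k, R, or σ). -/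
open MeasureTheory Set
open scoped ENNReal

noncomputable section

set_option maxHeartbeats 1000000

def dyadicCube (n : ℕ) (k : ℤ) (m : Fin n → ℤ) : Set (Fin n → ℝ) :=
  {x | ∀ i, (m i : ℝ) * (2:ℝ) ^ k ≤ x i ∧ x i < ((m i : ℝ) + 1) * (2:ℝ) ^ k}

def IsDyadicCube {n : ℕ} (Q : Set (Fin n → ℝ)) : Prop := ∃ k m, Q = dyadicCube n k m

def IsCube {n : ℕ} (Q : Set (Fin n → ℝ)) : Prop :=
  ∃ (a : Fin n → ℝ) (h : ℝ), 0 < h ∧ Q = {x | ∀ i, a i ≤ x i ∧ x i < a i + h}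

def IsSparse {n : ℕ} (η : ℝ≥0∞) (S : Set (Set (Fin n → ℝ))) : Prop :=
  (∀ Q ∈ S, IsDyadicCube Q) ∧
  ∃ E : Set (Fin n → ℝ) → Set (Fin n → ℝ),
    (∀ Q ∈ S, E Q ⊆ Q ∧ MeasurableSet (E Q) ∧ η * volume Q ≤ volume (E Q)) ∧
    S.PairwiseDisjoint E

def mass {n : ℕ} (w : (Fin n → ℝ) → ℝ≥0∞) (Q : Set (Fin n → ℝ)) : ℝ≥0∞ := ∫⁻ x in Q, w x

def avg {n : ℕ} (w : (Fin n → ℝ) → ℝ≥0∞) (Q : Set (Fin n → ℝ)) : ℝ≥0∞ := mass w Q / volume Q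

def maximalOp {n : ℕ} (f : (Fin n → ℝ) → ℝ≥0∞) (x : Fin n → ℝ) : ℝ≥0∞ :=
  ⨆ (Q : Set (Fin n → ℝ)) (_ : IsCube Q) (_ : x ∈ Q), avg f Q

/-! ### Auxiliary lemmas about dyadic cubes -/

lemma dyadicCube_eq_pi (n : ℕ) (k : ℤ) (m : Fin n → ℤ) :
    dyadicCube n k m = Set.pi Set.univ
      (fun i => Ico ((m i : ℝ) * (2:ℝ) ^ k) (((m i : ℝ) + 1) * (2:ℝ) ^ k)) := by
  ext x; simp [dyadicCube, Set.mem_pi, Set.mem_Ico]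

lemma dyadicCube_measurable (n : ℕ) (k : ℤ) (m : Fin n → ℤ) :
    MeasurableSet (dyadicCube n k m) := by
  rw [dyadicCube_eq_pi]
  exact MeasurableSet.univ_pi (fun i => measurableSet_Ico)

lemma dyadicCube_volume (n : ℕ) (k : ℤ) (m : Fin n → ℤ) :
    volume (dyadicCube n k m) = (ENNReal.ofReal ((2:ℝ)^k))^n := by
  rw [dyadicCube_eq_pi, volume_pi_pi]
  have : ∀ i : Fin n, volume (Ico ((m i : ℝ) * (2:ℝ) ^ k) (((m i : ℝ) + 1) * (2:ℝ) ^ k))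
      = ENNReal.ofReal ((2:ℝ)^k) := by
    intro i
    rw [Real.volume_Ico]
    ring_nf
  simp [this]

lemma dyadicCube_volume_pos (n : ℕ) (k : ℤ) (m : Fin n → ℤ) :
    0 < volume (dyadicCube n k m) := by
  rw [dyadicCube_volume]
  positivity

lemma dyadicCube_volume_ne_top (n : ℕ) (k : ℤ) (m : Fin n → ℤ) :
    volume (dyadicCube n k m) ≠ ∞ := by
  rw [dyadicCube_volume]
  exact ENNReal.pow_ne_top ENNReal.ofReal_ne_top

lemma dyadic_interval_nested {k k' : ℤ} (hk : k ≤ k') {m m' : ℤ} {x : ℝ}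
    (h1 : (m:ℝ) * (2:ℝ)^k ≤ x) (h2 : x < ((m:ℝ)+1) * (2:ℝ)^k)
    (h3 : (m':ℝ) * (2:ℝ)^k' ≤ x) (h4 : x < ((m':ℝ)+1) * (2:ℝ)^k') :
    (m':ℝ) * (2:ℝ)^k' ≤ (m:ℝ) * (2:ℝ)^k ∧ ((m:ℝ)+1) * (2:ℝ)^k ≤ ((m':ℝ)+1) * (2:ℝ)^k' := by
  obtain ⟨d, rfl⟩ : ∃ d : ℕ, k' = k + d := ⟨(k' - k).toNat, by omega⟩
  have hp : (0:ℝ) < (2:ℝ)^k := by positivity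
  have hsplit : (2:ℝ)^(k + (d:ℤ)) = (2:ℝ)^k * (2:ℝ)^d := by
    rw [zpow_add₀ (by norm_num : (2:ℝ) ≠ 0)]
    norm_num
  rw [hsplit] at h3 h4 ⊢
  have key1 : (m' : ℝ) * 2^d ≤ m := by
    have : (m':ℝ) * 2^d * 2^k < ((m:ℝ)+1) * 2^k := by nlinarith
    have h5 : (m':ℝ) * 2^d < (m:ℝ) + 1 := by
      exact lt_of_mul_lt_mul_right (by linarith) hp.le
    have : (m' * 2^d : ℤ) < m + 1 := by
      exact_mod_cast (by push_cast; linarith : ((m' * 2^d : ℤ) : ℝ) < ((m + 1 : ℤ) : ℝ))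
    have : (m' * 2^d : ℤ) ≤ m := by omega
    exact_mod_cast (by exact_mod_cast this : ((m' * 2^d : ℤ) : ℝ) ≤ (m : ℝ))
  have key2 : (m:ℝ) + 1 ≤ ((m':ℝ)+1) * 2^d := by
    have h5 : (m:ℝ) < ((m':ℝ)+1) * 2^d := by
      have : (m:ℝ) * 2^k < ((m':ℝ)+1) * 2^d * 2^k := by nlinarith
      exact lt_of_mul_lt_mul_right (by linarith) hp.le
    have : (m : ℤ) < (m' + 1) * 2^d := by
      exact_mod_cast (by push_cast; linarith : ((m:ℤ):ℝ) < (((m'+1) * 2^d : ℤ) : ℝ))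
    have : (m : ℤ) + 1 ≤ (m' + 1) * 2^d := by omega
    exact_mod_cast (by exact_mod_cast this : (((m:ℤ)+1 : ℤ):ℝ) ≤ (((m'+1) * 2^d : ℤ):ℝ))
  constructor
  · nlinarith
  · nlinarith

lemma dyadicCube_subset_of_le {n : ℕ} {k k' : ℤ} (hk : k ≤ k') {m : Fin n → ℤ}
    {m' : Fin n → ℤ} {x : Fin n → ℝ} (hx1 : x ∈ dyadicCube n k m)
    (hx2 : x ∈ dyadicCube n k' m') : dyadicCube n k m ⊆ dyadicCube n k' m' := by
  intro y hy i
  obtain ⟨h1, h2⟩ := hx1 i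
  obtain ⟨h3, h4⟩ := hx2 i
  obtain ⟨hl, hr⟩ := dyadic_interval_nested hk h1 h2 h3 h4
  obtain ⟨h5, h6⟩ := hy i
  exact ⟨le_trans hl h5, lt_of_lt_of_le h6 hr⟩

lemma dyadicCube_nested {n : ℕ} {k k' : ℤ} {m m' : Fin n → ℤ}
    (h : (dyadicCube n k m ∩ dyadicCube n k' m').Nonempty) :
    dyadicCube n k m ⊆ dyadicCube n k' m' ∨ dyadicCube n k' m' ⊆ dyadicCube n k m := by
  obtain ⟨x, hx1, hx2⟩ := h
  rcases le_total k k' with hk | hk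
  · exact Or.inl (dyadicCube_subset_of_le hk hx1 hx2)
  · exact Or.inr (dyadicCube_subset_of_le hk hx2 hx1)

lemma dyadicCube_corner_mem {n : ℕ} (k : ℤ) (m : Fin n → ℤ) :
    (fun i => (m i : ℝ) * (2:ℝ)^k) ∈ dyadicCube n k m := by
  intro i
  have hp : (0:ℝ) < (2:ℝ)^k := by positivity
  refine ⟨le_refl _, ?_⟩
  show (m i : ℝ) * 2^k < ((m i:ℝ)+1) * 2^k
  nlinarith

lemma dyadicCube_scale_le {n : ℕ} (hn : 0 < n) {k k' : ℤ} {m m' : Fin n → ℤ}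
    (h : dyadicCube n k m ⊆ dyadicCube n k' m') : k ≤ k' := by
  set i : Fin n := ⟨0, hn⟩
  have hp : (0:ℝ) < (2:ℝ)^k := by positivity
  have hIco : Ico ((m i:ℝ) * 2^k) (((m i:ℝ)+1) * 2^k) ⊆
      Ico ((m' i:ℝ) * 2^k') (((m' i:ℝ)+1) * 2^k') := by
    intro y hy
    have hx : (fun j => if j = i then y else (m j : ℝ) * 2^k) ∈ dyadicCube n k m := by
      intro j
      by_cases hj : j = i
      · subst hj
        simpa using ⟨hy.1, hy.2⟩
      · simp only [if_neg hj]
        refine ⟨le_refl _, ?_⟩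
        nlinarith
    have := h hx i
    simpa using this
  have hne : (m i:ℝ) * 2^k < ((m i:ℝ)+1) * 2^k := by nlinarith
  rw [Ico_subset_Ico_iff hne] at hIco
  have h2 : (2:ℝ)^k ≤ (2:ℝ)^k' := by
    nlinarith [hIco.1, hIco.2]
  exact (zpow_le_zpow_iff_right₀ (by norm_num : (1:ℝ) < 2)).mp h2

lemma dyadicCube_index_eq {n : ℕ} {k : ℤ} {m : Fin n → ℤ} {x : Fin n → ℝ}
    (hx : x ∈ dyadicCube n k m) : m = fun i => ⌊x i / (2:ℝ)^k⌋ := by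
  funext i
  have hp : (0:ℝ) < (2:ℝ)^k := by positivity
  obtain ⟨h1, h2⟩ := hx i
  symm
  rw [Int.floor_eq_iff]
  constructor
  · rw [le_div_iff₀ hp]; exact h1
  · rw [div_lt_iff₀ hp]; linarith

lemma ancestors_finite {n : ℕ} {Q R : Set (Fin n → ℝ)} (hQ : IsDyadicCube Q)
    (hR : IsDyadicCube R) :
    {Q' : Set (Fin n → ℝ) | IsDyadicCube Q' ∧ Q ⊆ Q' ∧ Q' ⊆ R}.Finite := by
  rcases Nat.eq_zero_or_pos n with hn | hn
  · subst hn
    have : Finite (Fin 0 → ℝ) := by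
      have : Subsingleton (Fin 0 → ℝ) := ⟨fun a b => funext fun i => absurd i.2 (by omega)⟩
      exact Finite.of_subsingleton
    exact Set.toFinite _
  · obtain ⟨kQ, mQ, rfl⟩ := hQ
    obtain ⟨kR, mR, rfl⟩ := hR
    set x : Fin n → ℝ := fun i => (mQ i : ℝ) * (2:ℝ)^kQ with hxdef
    apply Set.Finite.subset ((Set.finite_Icc kQ kR).image
      (fun j => dyadicCube n j (fun i => ⌊x i / (2:ℝ)^j⌋)))
    rintro Q' ⟨⟨k', m', rfl⟩, hQQ', hQ'R⟩
    have hx1 : x ∈ dyadicCube n kQ mQ := dyadicCube_corner_mem kQ mQ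
    have hx2 : x ∈ dyadicCube n k' m' := hQQ' hx1
    refine ⟨k', ⟨dyadicCube_scale_le hn hQQ', dyadicCube_scale_le hn hQ'R⟩, ?_⟩
    simp only []
    rw [← dyadicCube_index_eq hx2]

theorem statement0 (eta : ℝ≥0∞) (heta0 : 0 < eta) (heta1 : eta ≤ 1) :
    ∃ C : ℝ≥0∞, C < ∞ ∧ ∀ (n : ℕ) (σ : (Fin n → ℝ) → ℝ≥0∞), Measurable σ →
      ∀ (S : Set (Set (Fin n → ℝ))), IsSparse eta S → ∀ R ∈ S, ∀ k : ℤ,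
      ∑' Q : {Q : Set (Fin n → ℝ) // Q ∈ S ∧ Q ⊆ R ∧
          (2:ℝ≥0∞) ^ (k:ℝ) < avg σ Q ∧ avg σ Q ≤ (2:ℝ≥0∞) ^ ((k:ℝ)+1)},
        mass σ Q.1 ≤ C * mass σ R := by
  have heta_ne_top : eta ≠ ∞ := (heta1.trans_lt (by norm_num)).ne
  refine ⟨2 * eta⁻¹, ENNReal.mul_lt_top (by norm_num) (ENNReal.inv_lt_top.mpr heta0), ?_⟩
  intro n σ hσ S hS R hR k
  obtain ⟨hdy, E, hE, hdisj⟩ := hS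
  set t : ℝ≥0∞ := (2:ℝ≥0∞) ^ (k:ℝ) with ht
  have ht0 : t ≠ 0 := (ENNReal.rpow_pos (by norm_num) (by norm_num)).ne'
  have httop : t ≠ ∞ := by
    rw [ht, ← ENNReal.coe_ofNat, ← ENNReal.coe_rpow_of_ne_zero (by norm_num)]
    exact ENNReal.coe_ne_top
  have ht1 : (2:ℝ≥0∞) ^ ((k:ℝ)+1) = t * 2 := by
    rw [ht, ENNReal.rpow_add _ _ (by norm_num) (by norm_num), ENNReal.rpow_one]
  set F : Set (Set (Fin n → ℝ)) := {Q | Q ∈ S ∧ Q ⊆ R ∧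
      (2:ℝ≥0∞) ^ (k:ℝ) < avg σ Q ∧ avg σ Q ≤ (2:ℝ≥0∞) ^ ((k:ℝ)+1)} with hF
  have hFS : F ⊆ S := fun Q hQ => hQ.1
  have hFdy : ∀ Q ∈ F, IsDyadicCube Q := fun Q hQ => hdy Q hQ.1
  have hFcount : F.Countable := by
    have hsub : F ⊆ Set.range (fun p : ℤ × (Fin n → ℤ) => dyadicCube n p.1 p.2) := by
      intro Q hQ
      obtain ⟨k', m', rfl⟩ := hFdy Q hQ
      exact ⟨(k', m'), rfl⟩
    exact (Set.countable_range _).mono hsub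
  -- volume facts
  have hvol0 : ∀ Q : Set (Fin n → ℝ), IsDyadicCube Q → volume Q ≠ 0 := by
    rintro Q ⟨k', m', rfl⟩; exact (dyadicCube_volume_pos n k' m').ne'
  have hvoltop : ∀ Q : Set (Fin n → ℝ), IsDyadicCube Q → volume Q ≠ ∞ := by
    rintro Q ⟨k', m', rfl⟩; exact dyadicCube_volume_ne_top n k' m'
  have hQmeas : ∀ Q : Set (Fin n → ℝ), IsDyadicCube Q → MeasurableSet Q := by
    rintro Q ⟨k', m', rfl⟩; exact dyadicCube_measurable n k' m'
  -- mass of each cube in F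
  have h_mass_le : ∀ Q ∈ F, mass σ Q ≤ t * 2 * volume Q := by
    intro Q hQ
    have := hQ.2.2.2
    rw [ht1] at this
    rw [avg] at this
    exact le_trans (by
      rw [ENNReal.div_le_iff_le_mul (Or.inl (hvol0 Q (hFdy Q hQ)))
        (Or.inl (hvoltop Q (hFdy Q hQ)))] at this
      exact this) (le_refl _)
  have h_vol_le : ∀ Q ∈ F, volume Q ≤ t⁻¹ * mass σ Q := by
    intro Q hQ
    have := hQ.2.2.1
    rw [avg] at this
    have hlt : t * volume Q < mass σ Q := by
      rw [ENNReal.lt_div_iff_mul_lt (Or.inl (hvol0 Q (hFdy Q hQ)))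
        (Or.inl (hvoltop Q (hFdy Q hQ)))] at this
      exact this
    calc volume Q = t⁻¹ * (t * volume Q) := by
          rw [← mul_assoc, ENNReal.inv_mul_cancel ht0 httop, one_mul]
      _ ≤ t⁻¹ * mass σ Q := mul_le_mul_right hlt.le _
  -- maximal elements
  set M : Set (Set (Fin n → ℝ)) := {P ∈ F | ∀ Q ∈ F, P ⊆ Q → P = Q} with hM
  have hMF : M ⊆ F := fun P hP => hP.1
  have hmax : ∀ Q ∈ F, ∃ P ∈ M, Q ⊆ P := by
    intro Q hQ
    set A : Set (Set (Fin n → ℝ)) := {Q' ∈ F | Q ⊆ Q'} with hA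
    have hAfin : A.Finite := by
      apply Set.Finite.subset (ancestors_finite (hFdy Q hQ) (hdy R hR))
      rintro Q' ⟨hQ'F, hQQ'⟩
      exact ⟨hFdy Q' hQ'F, hQQ', hQ'F.2.1⟩
    obtain ⟨P, hPA, hPmax⟩ := Set.Finite.exists_maximalFor id A hAfin ⟨Q, hQ, subset_refl Q⟩
    refine ⟨P, ⟨hPA.1, fun Q'' hQ'' hPQ'' => ?_⟩, hPA.2⟩
    exact Set.Subset.antisymm hPQ'' (hPmax ⟨hQ'', hPA.2.trans hPQ''⟩ hPQ'')
  have hMdisj : M.PairwiseDisjoint id := by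
    intro P1 h1 P2 h2 hne
    simp only [id, Function.onFun]
    by_contra hnd
    rw [Set.not_disjoint_iff_nonempty_inter] at hnd
    obtain ⟨k1, m1, he1⟩ := hFdy P1 (hMF h1)
    obtain ⟨k2, m2, he2⟩ := hFdy P2 (hMF h2)
    rw [he1, he2] at hnd
    rcases dyadicCube_nested hnd with hs | hs
    · rw [← he1, ← he2] at hs
      exact hne (h1.2 P2 (hMF h2) hs)
    · rw [← he1, ← he2] at hs
      exact hne (h2.2 P1 (hMF h1) hs).symm
  have hMcount : M.Countable := hFcount.mono hMF
  -- unions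
  have hEsub : (⋃ Q ∈ F, E Q) ⊆ ⋃ P ∈ M, P := by
    intro x hx
    rw [Set.mem_iUnion₂] at hx
    obtain ⟨Q, hQ, hxE⟩ := hx
    obtain ⟨P, hP, hQP⟩ := hmax Q hQ
    exact Set.mem_biUnion hP (hQP ((hE Q (hFS hQ)).1 hxE))
  have hMsub : (⋃ P ∈ M, P) ⊆ R := by
    intro x hx
    rw [Set.mem_iUnion₂] at hx
    obtain ⟨P, hP, hxP⟩ := hx
    exact (hMF hP).2.1 hxP
  -- the weighted measure
  set ν : Measure (Fin n → ℝ) := volume.withDensity σ with hν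
  have hνapp : ∀ Q : Set (Fin n → ℝ), MeasurableSet Q → ν Q = mass σ Q := by
    intro Q h
    rw [hν, withDensity_apply σ h]
    rfl
  have hMmass : ∑' P : M, mass σ (P:Set (Fin n → ℝ)) ≤ mass σ R := by
    have hsum : ∑' P : M, mass σ (P:Set (Fin n → ℝ)) = ν (⋃ P ∈ M, P) := by
      have hb := measure_biUnion (μ := ν) hMcount hMdisj
        (fun P hP => hQmeas P (hFdy P (hMF hP)))
      simp only [id_eq] at hb
      rw [hb]
      exact tsum_congr fun P => (hνapp P (hQmeas P (hFdy P (hMF P.2)))).symm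
    rw [hsum, ← hνapp R (hQmeas R (hdy R hR))]
    exact measure_mono hMsub
  have key : ∑' Q : F, mass σ (Q : Set (Fin n → ℝ)) ≤ (2 * eta⁻¹) * mass σ R := by
    calc ∑' Q : F, mass σ (Q : Set (Fin n → ℝ))
        ≤ ∑' Q : F, (t * 2 * eta⁻¹) * volume (E (Q : Set (Fin n → ℝ))) := by
          apply ENNReal.tsum_le_tsum
          intro Q
          have h1 := h_mass_le Q.1 Q.2
          have h2 : volume (Q : Set (Fin n → ℝ)) ≤ eta⁻¹ * volume (E (Q:Set (Fin n → ℝ))) := by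
            calc volume (Q:Set (Fin n → ℝ))
                = eta⁻¹ * (eta * volume (Q:Set (Fin n → ℝ))) := by
                  rw [← mul_assoc, ENNReal.inv_mul_cancel heta0.ne' heta_ne_top, one_mul]
              _ ≤ eta⁻¹ * volume (E (Q:Set (Fin n → ℝ))) :=
                  mul_le_mul_right (hE Q.1 (hFS Q.2)).2.2 _
          calc mass σ (Q:Set (Fin n → ℝ)) ≤ t * 2 * volume (Q:Set (Fin n → ℝ)) := h1
            _ ≤ t * 2 * (eta⁻¹ * volume (E (Q:Set (Fin n → ℝ)))) := mul_le_mul_right h2 _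
            _ = (t * 2 * eta⁻¹) * volume (E (Q:Set (Fin n → ℝ))) := by ring
      _ = (t * 2 * eta⁻¹) * ∑' Q : F, volume (E (Q : Set (Fin n → ℝ))) :=
          ENNReal.tsum_mul_left
      _ = (t * 2 * eta⁻¹) * volume (⋃ Q ∈ F, E Q) := by
          rw [measure_biUnion hFcount (hdisj.subset hFS) (fun Q hQ => (hE Q (hFS hQ)).2.1)]
      _ ≤ (t * 2 * eta⁻¹) * volume (⋃ P ∈ M, P) := mul_le_mul_right (measure_mono hEsub) _
      _ ≤ (t * 2 * eta⁻¹) * ∑' P : M, volume (P : Set (Fin n → ℝ)) := by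
          apply mul_le_mul_right
          have hb := measure_biUnion_le volume hMcount (id : Set (Fin n → ℝ) → Set (Fin n → ℝ))
          simpa using hb
      _ ≤ (t * 2 * eta⁻¹) * ∑' P : M, t⁻¹ * mass σ (P : Set (Fin n → ℝ)) :=
          by
            apply mul_le_mul_right
            apply ENNReal.tsum_le_tsum
            intro P
            exact h_vol_le P.1 (hMF P.2)
      _ = (t * 2 * eta⁻¹ * t⁻¹) * ∑' P : M, mass σ (P : Set (Fin n → ℝ)) := by
          rw [ENNReal.tsum_mul_left, ← mul_assoc]
      _ ≤ (t * 2 * eta⁻¹ * t⁻¹) * mass σ R := mul_le_mul_right hMmass _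
      _ = (2 * eta⁻¹) * mass σ R := by
          have heq : t * 2 * eta⁻¹ * t⁻¹ = (t * t⁻¹) * (2 * eta⁻¹) := by ring
          rw [heq, ENNReal.mul_inv_cancel ht0 httop, one_mul]
  exact key
end
end

section
/- Let S be an η-sparse family of dyadic cubes in ℝⁿ, w a weight, R a dyadic cube, and 0 < s < 1. Then ∑_{Q ∈ S, Q ⊆ R} (w_Q)^s |Q| ≤ C (w_R)^s |R|, where C depends only on η, s, and n. -/
open MeasureTheory Set
open scoped ENNReal

noncomputable section

lemma two_zpow_pos (k : ℤ) : (0:ℝ) < (2:ℝ) ^ k := zpow_pos two_pos k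

lemma dyadic_eq_pi (n k m) : dyadicCube n k m =
    Set.pi univ fun i => Ico ((m i : ℝ) * (2:ℝ)^k) (((m i : ℝ) + 1) * (2:ℝ)^k) := by
  ext x; simp [dyadicCube, Set.mem_pi, Set.mem_Ico]

lemma dyadic_measurable (n k m) : MeasurableSet (dyadicCube n k m) := by
  rw [dyadic_eq_pi]; exact MeasurableSet.univ_pi fun i => measurableSet_Ico

lemma dyadic_volume (n k m) :
    volume (dyadicCube n k m) = (ENNReal.ofReal ((2:ℝ)^k)) ^ n := by
  rw [dyadic_eq_pi, volume_pi_pi]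
  have : ∀ i : Fin n, volume (Ico ((m i : ℝ) * (2:ℝ)^k) (((m i : ℝ) + 1) * (2:ℝ)^k))
      = ENNReal.ofReal ((2:ℝ)^k) := by
    intro i; rw [Real.volume_Ico]; ring_nf
  simp [this]

lemma dyadic_vol_pos (n k m) : 0 < volume (dyadicCube n k m) := by
  rw [dyadic_volume]
  exact ENNReal.pow_pos (by simp [ENNReal.ofReal_pos, two_zpow_pos k]) n

lemma dyadic_vol_ne_top (n k m) : volume (dyadicCube n k m) ≠ ∞ := by
  rw [dyadic_volume]
  exact (ENNReal.pow_ne_top ENNReal.ofReal_ne_top)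

lemma dyadic_mem_iff {n k m} {x : Fin n → ℝ} :
    x ∈ dyadicCube n k m ↔ ∀ i, ⌊x i / (2:ℝ)^k⌋ = m i := by
  constructor
  · intro h i
    obtain ⟨h1, h2⟩ := h i
    rw [Int.floor_eq_iff]
    constructor
    · exact (le_div_iff₀ (two_zpow_pos k)).2 h1
    · exact (div_lt_iff₀ (two_zpow_pos k)).2 (by push_cast; linarith)
  · intro h i
    have h1 := Int.floor_le (x i / (2:ℝ)^k)
    have h2 := Int.lt_floor_add_one (x i / (2:ℝ)^k)
    rw [h i] at h1 h2
    constructor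
    · exact (le_div_iff₀ (two_zpow_pos k)).1 h1
    · have := (div_lt_iff₀ (two_zpow_pos k)).1 h2
      linarith [this]

/-- The dyadic cube of scale `k` containing `x`. -/
def D (n : ℕ) (k : ℤ) (x : Fin n → ℝ) : Set (Fin n → ℝ) :=
  dyadicCube n k (fun i => ⌊x i / (2:ℝ)^k⌋)

lemma mem_D (n k) (x : Fin n → ℝ) : x ∈ D n k x := dyadic_mem_iff.2 fun _ => rfl

lemma eq_D {n k m} {x : Fin n → ℝ} (h : x ∈ dyadicCube n k m) :
    dyadicCube n k m = D n k x := by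
  have h2 := dyadic_mem_iff.1 h
  have : m = fun i => ⌊x i / (2:ℝ)^k⌋ := funext fun i => (h2 i).symm
  rw [D, ← this]

lemma D_mono {n} {k k' : ℤ} (h : k ≤ k') (x : Fin n → ℝ) : D n k x ⊆ D n k' x := by
  intro y hy
  obtain ⟨d, hd⟩ : ∃ d : ℕ, k' = k + d := ⟨(k' - k).toNat, by omega⟩
  have h2d : ((2:ℝ)^k') = (2:ℝ)^k * (2:ℝ)^(d:ℤ) := by rw [hd, zpow_add₀ (two_ne_zero)]
  -- key endpoint estimates
  set m : Fin n → ℤ := fun i => ⌊x i / (2:ℝ)^k⌋ with hm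
  set m' : Fin n → ℤ := fun i => ⌊x i / (2:ℝ)^k'⌋ with hm'
  have key : ∀ i, ((m' i : ℝ)) * (2:ℝ)^k' ≤ (m i) * (2:ℝ)^k ∧
      ((m i : ℝ) + 1) * (2:ℝ)^k ≤ ((m' i) + 1) * (2:ℝ)^k' := by
    intro i
    have hle : ((m' i : ℝ)) * (2:ℝ)^k' ≤ x i := (le_div_iff₀ (two_zpow_pos k')).1 (Int.floor_le _)
    have hlt : x i < ((m' i : ℝ) + 1) * (2:ℝ)^k' := by
      have := Int.lt_floor_add_one (x i / (2:ℝ)^k')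
      have := (div_lt_iff₀ (two_zpow_pos k')).1 this
      push_cast at this ⊢; linarith
    constructor
    · -- m' i * 2^d ≤ m i
      have h1 : ((m' i * 2^d : ℤ) : ℝ) ≤ x i / (2:ℝ)^k := by
        rw [le_div_iff₀ (two_zpow_pos k)]
        push_cast
        calc ((m' i : ℝ)) * 2^d * (2:ℝ)^k = (m' i) * (2:ℝ)^k' := by
              rw [h2d]; rw [zpow_natCast]; ring
          _ ≤ x i := hle
      have h2 : m' i * 2^d ≤ m i := Int.le_floor.2 h1
      calc ((m' i : ℝ)) * (2:ℝ)^k' = ((m' i * 2^d : ℤ) : ℝ) * (2:ℝ)^k := by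
            push_cast; rw [h2d, zpow_natCast]; ring
        _ ≤ (m i) * (2:ℝ)^k := by
            have : ((m' i * 2^d : ℤ) : ℝ) ≤ (m i : ℝ) := by exact_mod_cast h2
            nlinarith [two_zpow_pos k]
    · -- m i + 1 ≤ (m' i + 1) * 2^d
      have h1 : (m i : ℝ) < ((m' i + 1) * 2^d : ℤ) := by
        have : x i / (2:ℝ)^k < ((m' i + 1) * 2^d : ℤ) := by
          rw [div_lt_iff₀ (two_zpow_pos k)]
          push_cast
          calc x i < ((m' i : ℝ) + 1) * (2:ℝ)^k' := hlt
            _ = ((m' i : ℝ) + 1) * 2^d * (2:ℝ)^k := by rw [h2d, zpow_natCast]; ring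
        exact lt_of_le_of_lt (Int.floor_le _) this
      have h2 : m i + 1 ≤ (m' i + 1) * 2^d := by exact_mod_cast Int.add_one_le_of_lt (by exact_mod_cast h1)
      calc ((m i : ℝ) + 1) * (2:ℝ)^k = (((m i + 1 : ℤ)) : ℝ) * (2:ℝ)^k := by push_cast; ring
        _ ≤ (((m' i + 1) * 2^d : ℤ) : ℝ) * (2:ℝ)^k := by
            have : ((m i + 1 : ℤ) : ℝ) ≤ (((m' i + 1) * 2^d : ℤ) : ℝ) := by exact_mod_cast h2
            nlinarith [two_zpow_pos k]
        _ = ((m' i : ℝ) + 1) * (2:ℝ)^k' := by push_cast; rw [h2d, zpow_natCast]; ring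
  intro j
  obtain ⟨hy1, hy2⟩ := hy j
  exact ⟨le_trans (key j).1 hy1, lt_of_lt_of_le hy2 (key j).2⟩


lemma scale_le {n : ℕ} (hn : 0 < n) {k k' : ℤ} {m : Fin n → ℤ} {m' : Fin n → ℤ}
    (h : dyadicCube n k m ⊆ dyadicCube n k' m') : k ≤ k' := by
  have hv := measure_mono (μ := volume) h
  rw [dyadic_volume, dyadic_volume] at hv
  rw [← ENNReal.ofReal_pow (by positivity), ← ENNReal.ofReal_pow (by positivity)] at hv
  rw [ENNReal.ofReal_le_ofReal_iff (by positivity)] at hv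
  have h2 : (2:ℝ)^k ≤ (2:ℝ)^k' := by
    have := pow_le_pow_iff_left₀ (a := (2:ℝ)^k) (b := (2:ℝ)^k') (by positivity) (by positivity) hn.ne'
    exact this.1 hv
  exact (zpow_le_zpow_iff_right₀ (by norm_num : (1:ℝ) < 2)).1 h2

lemma countable_dyadic (n : ℕ) : {Q : Set (Fin n → ℝ) | IsDyadicCube Q}.Countable := by
  have hsub : {Q : Set (Fin n → ℝ) | IsDyadicCube Q} ⊆
      Set.range (fun p : ℤ × (Fin n → ℤ) => dyadicCube n p.1 p.2) := by
    rintro Q ⟨k, m, rfl⟩; exact ⟨(k, m), rfl⟩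
  exact (Set.countable_range _).mono hsub

lemma mass_mono {n : ℕ} (w : (Fin n → ℝ) → ℝ≥0∞) {Q R : Set (Fin n → ℝ)} (h : Q ⊆ R) :
    mass w Q ≤ mass w R := lintegral_mono_set h

lemma mass_eq_withDensity {n : ℕ} (w : (Fin n → ℝ) → ℝ≥0∞) {Q : Set (Fin n → ℝ)}
    (hQ : MeasurableSet Q) : mass w Q = (volume.withDensity w) Q := (withDensity_apply w hQ).symm

lemma mul_vol_le_mass {n : ℕ} {w : (Fin n → ℝ) → ℝ≥0∞} {t : ℝ≥0∞} {k : ℤ} {m : Fin n → ℤ}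
    (h : t ≤ avg w (dyadicCube n k m)) :
    t * volume (dyadicCube n k m) ≤ mass w (dyadicCube n k m) := by
  calc t * volume (dyadicCube n k m)
      ≤ avg w (dyadicCube n k m) * volume (dyadicCube n k m) :=
        mul_le_mul_left h _
    _ = mass w (dyadicCube n k m) := by
        rw [avg, ENNReal.div_mul_cancel (dyadic_vol_pos n k m).ne' (dyadic_vol_ne_top n k m)]

section Stopping

variable {n : ℕ} (w : (Fin n → ℝ) → ℝ≥0∞)

/-- The family of stopping cubes inside `R = dyadicCube n k₀ m₀` at level `t`. -/
def stopFam (t : ℝ≥0∞) (k₀ : ℤ) (m₀ : Fin n → ℤ) : Set (Set (Fin n → ℝ)) :=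
  {P | ∃ (l : ℤ) (x : Fin n → ℝ), x ∈ dyadicCube n k₀ m₀ ∧ P = D n l x ∧ l ≤ k₀ ∧
    t < avg w P ∧ ∀ l', l < l' → l' ≤ k₀ → avg w (D n l' x) ≤ t}

lemma stopFam_dyadic {t k₀ m₀} {P : Set (Fin n → ℝ)} (hP : P ∈ stopFam w t k₀ m₀) :
    IsDyadicCube P := by
  obtain ⟨l, x, -, rfl, -⟩ := hP
  exact ⟨l, _, rfl⟩

lemma stopFam_countable (t k₀ m₀) : (stopFam w t k₀ m₀).Countable :=
  (countable_dyadic n).mono fun P hP => stopFam_dyadic w hP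

lemma stopFam_subset {t k₀ m₀} {P : Set (Fin n → ℝ)} (hP : P ∈ stopFam w t k₀ m₀) :
    P ⊆ dyadicCube n k₀ m₀ := by
  obtain ⟨l, x, hx, rfl, hl, -⟩ := hP
  have hR : dyadicCube n k₀ m₀ = D n k₀ x := eq_D hx
  rw [hR]
  exact D_mono hl x

lemma stopFam_avg {t k₀ m₀} {P : Set (Fin n → ℝ)} (hP : P ∈ stopFam w t k₀ m₀) :
    t < avg w P := by
  obtain ⟨l, x, -, rfl, -, h, -⟩ := hP
  exact h

lemma stopFam_disjoint (t k₀ m₀) : (stopFam w t k₀ m₀).PairwiseDisjoint id := by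
  -- first an auxiliary claim, symmetric version
  have key : ∀ P ∈ stopFam w t k₀ m₀, ∀ P' ∈ stopFam w t k₀ m₀,
      ∀ l x l' x', x ∈ dyadicCube n k₀ m₀ → P = D n l x → l ≤ k₀ →
      (∀ l'', l < l'' → l'' ≤ k₀ → avg w (D n l'' x) ≤ t) →
      P' = D n l' x' → t < avg w P' → l ≤ l' → l' ≤ k₀ →
      ¬ Disjoint P P' → P = P' := by
    intro P hP P' hP' l x l' x' hx hPD hlk hmax hP'D hP'avg hll' hl'k hnd
    rw [Set.not_disjoint_iff] at hnd
    obtain ⟨z, hzP, hzP'⟩ := hnd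
    -- D n l' z = P'
    have h1 : P' = D n l' z := by rw [hP'D] at hzP' ⊢; exact eq_D hzP'
    -- P = D n l z
    have h2 : P = D n l z := by rw [hPD] at hzP ⊢; exact eq_D hzP
    -- x ∈ D n l' z
    have hxz : x ∈ D n l' z := D_mono hll' z (h2 ▸ hPD ▸ mem_D n l x)
    -- so D n l' x = D n l' z
    have h3 : D n l' x = D n l' z := (eq_D hxz).symm.trans rfl
    rcases eq_or_lt_of_le hll' with rfl | hlt
    · rw [hPD, h3, ← h1]
    · exfalso
      have := hmax l' hlt hl'k
      rw [h3, ← h1] at this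
      exact absurd hP'avg (not_lt.2 this)
  intro P hP P' hP' hne
  by_contra hnd
  have hnd' : ¬ Disjoint P P' := fun h => hnd (by exact h)
  obtain ⟨l, x, hx, hPD, hlk, havg, hmax⟩ := hP
  obtain ⟨l', x', hx', hP'D, hl'k, havg', hmax'⟩ := hP'
  rcases le_total l l' with h | h
  · exact hne (key P ⟨l, x, hx, hPD, hlk, havg, hmax⟩ P' ⟨l', x', hx', hP'D, hl'k, havg', hmax'⟩
      l x l' x' hx hPD hlk hmax hP'D havg' h hl'k hnd')
  · exact hne (key P' ⟨l', x', hx', hP'D, hl'k, havg', hmax'⟩ P ⟨l, x, hx, hPD, hlk, havg, hmax⟩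
      l' x' l x hx' hP'D hl'k hmax' hPD havg h hlk fun hd => hnd' hd.symm).symm

/-- Every dyadic `Q ⊆ R` with large average is inside a stopping cube. -/
lemma exists_stop (hn : 0 < n) {t k₀ m₀} {j : ℤ} {mq : Fin n → ℤ}
    (hsub : dyadicCube n j mq ⊆ dyadicCube n k₀ m₀)
    (havg : t < avg w (dyadicCube n j mq)) :
    ∃ P ∈ stopFam w t k₀ m₀, dyadicCube n j mq ⊆ P := by
  have hjk : j ≤ k₀ := scale_le hn hsub
  set x : Fin n → ℝ := fun i => (mq i : ℝ) * (2:ℝ)^j with hxdef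
  have hxQ : x ∈ dyadicCube n j mq := by
    intro i
    refine ⟨le_refl _, ?_⟩
    have := two_zpow_pos j
    simp only [hxdef]
    nlinarith
  have hQD : dyadicCube n j mq = D n j x := eq_D hxQ
  have hxR : x ∈ dyadicCube n k₀ m₀ := hsub hxQ
  set F : Finset ℤ := (Finset.Icc j k₀).filter (fun l => t < avg w (D n l x)) with hF
  have hjF : j ∈ F := by
    rw [hF, Finset.mem_filter, Finset.mem_Icc]
    exact ⟨⟨le_refl j, hjk⟩, hQD ▸ havg⟩
  have hFne : F.Nonempty := ⟨j, hjF⟩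
  set l₀ := F.max' hFne with hl₀
  have hl₀F : l₀ ∈ F := F.max'_mem hFne
  rw [hF, Finset.mem_filter, Finset.mem_Icc] at hl₀F
  refine ⟨D n l₀ x, ⟨l₀, x, hxR, rfl, hl₀F.1.2, hl₀F.2, ?_⟩, ?_⟩
  · intro l' hl' hl'k
    by_contra hc
    push_neg at hc
    have : l' ∈ F := by
      rw [hF, Finset.mem_filter, Finset.mem_Icc]
      exact ⟨⟨le_trans hl₀F.1.1 hl'.le, hl'k⟩, hc⟩
    exact absurd (F.le_max' l' this) (not_le.2 (hl₀ ▸ hl'))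
  · rw [hQD]
    exact D_mono hl₀F.1.1 x

end Stopping

lemma stopping_sum {n : ℕ} (hn : 0 < n) {eta : ℝ≥0∞} (heta0 : 0 < eta) (heta_top : eta ≠ ∞)
    {S : Set (Set (Fin n → ℝ))} (hSd : ∀ Q ∈ S, IsDyadicCube Q)
    {E : Set (Fin n → ℝ) → Set (Fin n → ℝ)}
    (hE : ∀ Q ∈ S, E Q ⊆ Q ∧ MeasurableSet (E Q) ∧ eta * volume Q ≤ volume (E Q))
    (hEd : S.PairwiseDisjoint E)
    (w : (Fin n → ℝ) → ℝ≥0∞) (t : ℝ≥0∞) (k₀ : ℤ) (m₀ : Fin n → ℤ) :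
    t * ∑' Q : {Q : Set (Fin n → ℝ) // Q ∈ S ∧ Q ⊆ dyadicCube n k₀ m₀},
        (if t < avg w Q.1 then volume Q.1 else 0)
      ≤ eta⁻¹ * mass w (dyadicCube n k₀ m₀) := by
  classical
  set R := dyadicCube n k₀ m₀ with hR
  set T : Set (Set (Fin n → ℝ)) := {Q | Q ∈ S ∧ Q ⊆ R} with hT
  set T' : Set (Set (Fin n → ℝ)) := {Q | Q ∈ S ∧ Q ⊆ R ∧ t < avg w Q} with hT'
  have hT'count : T'.Countable := (countable_dyadic n).mono fun Q hQ => hSd Q hQ.1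
  -- Step A : rewrite the sum as a sum over T'
  have stepA : ∑' Q : {Q : Set (Fin n → ℝ) // Q ∈ S ∧ Q ⊆ R},
      (if t < avg w Q.1 then volume Q.1 else 0) = ∑' Q : T', volume (Q : Set (Fin n → ℝ)) := by
    have e1 : (∑' Q : {Q : Set (Fin n → ℝ) // Q ∈ S ∧ Q ⊆ R},
        (if t < avg w Q.1 then volume Q.1 else 0))
        = ∑' Q : Set (Fin n → ℝ), T.indicator (fun Q => if t < avg w Q then volume Q else 0) Q :=
      tsum_subtype T (fun Q => if t < avg w Q then volume Q else 0)
    have e2 : (∑' Q : T', volume (Q : Set (Fin n → ℝ)))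
        = ∑' Q : Set (Fin n → ℝ), T'.indicator volume Q := tsum_subtype T' volume
    rw [e1, e2]
    refine tsum_congr fun Q => ?_
    simp only [Set.indicator_apply, hT, hT', Set.mem_setOf_eq]
    by_cases h1 : Q ∈ S ∧ Q ⊆ R
    · by_cases h2 : t < avg w Q
      · simp [h1, h1.1, h1.2, h2]
      · simp [h1, h1.1, h1.2, h2]
    · have h3 : ¬(Q ∈ S ∧ Q ⊆ R ∧ t < avg w Q) := fun hc => h1 ⟨hc.1, hc.2.1⟩
      simp [h1, h3]
  rw [congrArg (fun z => t * z) stepA]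
  -- Step B : use sparseness
  have stepB : ∑' Q : T', volume (Q : Set (Fin n → ℝ))
      ≤ eta⁻¹ * ∑' Q : T', volume (E (Q : Set (Fin n → ℝ))) := by
    rw [← ENNReal.tsum_mul_left]
    refine ENNReal.tsum_le_tsum fun Q => ?_
    obtain ⟨-, -, h3⟩ := hE Q.1 Q.2.1
    calc volume (Q : Set (Fin n → ℝ))
        = eta⁻¹ * (eta * volume (Q : Set (Fin n → ℝ))) := by
          rw [← mul_assoc, ENNReal.inv_mul_cancel heta0.ne' heta_top, one_mul]
      _ ≤ eta⁻¹ * volume (E (Q : Set (Fin n → ℝ))) := mul_le_mul_right h3 _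
  -- Step C : sum of measures of the disjoint sets E Q
  have stepC : ∑' Q : T', volume (E (Q : Set (Fin n → ℝ))) = volume (⋃ Q ∈ T', E Q) := by
    refine (measure_biUnion hT'count (hEd.subset fun Q hQ => hQ.1) fun Q hQ => (hE Q hQ.1).2.1).symm
  -- Step D : the union is inside the union of stopping cubes
  have stepD : (⋃ Q ∈ T', E Q) ⊆ ⋃ P ∈ stopFam w t k₀ m₀, P := by
    refine Set.iUnion₂_subset fun Q hQ => ?_
    obtain ⟨hQS, hQR, hQavg⟩ := hQ
    obtain ⟨j, mq, rfl⟩ := hSd Q hQS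
    obtain ⟨P, hP, hQP⟩ := exists_stop w hn hQR hQavg
    exact subset_trans (hE _ hQS).1 (subset_trans hQP
      (Set.subset_biUnion_of_mem (u := fun P => P) hP))
  -- Step E/F : the stopping cubes
  have stepE : t * volume (⋃ P ∈ stopFam w t k₀ m₀, P) ≤ mass w R := by
    have hPd : ∀ P ∈ stopFam w t k₀ m₀, MeasurableSet P := by
      intro P hP
      obtain ⟨l, mP, rfl⟩ := stopFam_dyadic w hP
      exact dyadic_measurable n l mP
    rw [measure_biUnion (f := fun P => P) (stopFam_countable w t k₀ m₀)
      (stopFam_disjoint w t k₀ m₀) hPd]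
    rw [← ENNReal.tsum_mul_left]
    have h1 : ∀ P : stopFam w t k₀ m₀, t * volume (P : Set (Fin n → ℝ))
        ≤ (volume.withDensity w) (P : Set (Fin n → ℝ)) := by
      rintro ⟨P, hP⟩
      have havg := (stopFam_avg w hP).le
      obtain ⟨l, mP, hPeq⟩ := stopFam_dyadic w hP
      subst hPeq
      rw [← mass_eq_withDensity w (dyadic_measurable n l mP)]
      exact mul_vol_le_mass havg
    calc ∑' P : stopFam w t k₀ m₀, t * volume (P : Set (Fin n → ℝ))
        ≤ ∑' P : stopFam w t k₀ m₀, (volume.withDensity w) (P : Set (Fin n → ℝ)) :=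
          ENNReal.tsum_le_tsum h1
      _ = (volume.withDensity w) (⋃ P ∈ stopFam w t k₀ m₀, P) :=
          (measure_biUnion (f := fun P => P) (stopFam_countable w t k₀ m₀)
            (stopFam_disjoint w t k₀ m₀) hPd).symm
      _ ≤ (volume.withDensity w) R :=
          measure_mono (Set.iUnion₂_subset fun P hP => stopFam_subset w hP)
      _ = mass w R := (mass_eq_withDensity w (dyadic_measurable n k₀ m₀)).symm
  -- assemble
  calc t * ∑' Q : T', volume (Q : Set (Fin n → ℝ))
      ≤ t * (eta⁻¹ * ∑' Q : T', volume (E (Q : Set (Fin n → ℝ)))) := mul_le_mul_right stepB _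
    _ = eta⁻¹ * (t * volume (⋃ Q ∈ T', E Q)) := by rw [stepC]; ring
    _ ≤ eta⁻¹ * (t * volume (⋃ P ∈ stopFam w t k₀ m₀, P)) :=
        mul_le_mul_right (mul_le_mul_right (measure_mono stepD) _) _
    _ ≤ eta⁻¹ * mass w R := mul_le_mul_right stepE _

lemma dyadic_univ (k : ℤ) (m : Fin 0 → ℤ) : dyadicCube 0 k m = univ := by
  ext x; simp [dyadicCube]

lemma ennreal_le_inv_mul {t X B : ℝ≥0∞} (ht0 : t ≠ 0) (httop : t ≠ ∞)
    (h : t * X ≤ B) : X ≤ t⁻¹ * B := by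
  calc X = t⁻¹ * (t * X) := by rw [← mul_assoc, ENNReal.inv_mul_cancel ht0 httop, one_mul]
    _ ≤ t⁻¹ * B := mul_le_mul_right h _

theorem statement2 (eta : ℝ≥0∞) (heta0 : 0 < eta) (heta1 : eta ≤ 1) (s : ℝ)
    (hs0 : 0 < s) (hs1 : s < 1) (n : ℕ) :
    ∃ C : ℝ≥0∞, C < ∞ ∧ ∀ (w : (Fin n → ℝ) → ℝ≥0∞), Measurable w →
      ∀ (S : Set (Set (Fin n → ℝ))), IsSparse eta S →
      ∀ (R : Set (Fin n → ℝ)), IsDyadicCube R →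
      ∑' Q : {Q : Set (Fin n → ℝ) // Q ∈ S ∧ Q ⊆ R},
        (avg w Q.1) ^ s * volume Q.1 ≤ C * ((avg w R) ^ s * volume R) := by
  classical
  set r : ℝ≥0∞ := (2:ℝ≥0∞) ^ (s - 1) with hrdef
  have hr1 : r < 1 :=
    ENNReal.rpow_lt_one_of_one_lt_of_neg (by norm_num) (by linarith)
  have hsub1 : (1:ℝ≥0∞) - r ≠ 0 := (tsub_pos_of_lt hr1).ne'
  have hetat : eta ≠ ∞ := (lt_of_le_of_lt heta1 (by norm_num)).ne
  set C : ℝ≥0∞ := eta⁻¹ * 2 * (1 - r)⁻¹ with hCdef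
  have hC1 : 1 ≤ C := by
    have h1 : (1:ℝ≥0∞) ≤ eta⁻¹ := ENNReal.one_le_inv.2 heta1
    have h2 : (1:ℝ≥0∞) ≤ (1 - r)⁻¹ := ENNReal.one_le_inv.2 (tsub_le_self)
    calc (1:ℝ≥0∞) = 1 * 1 * 1 := by norm_num
      _ ≤ eta⁻¹ * 2 * (1 - r)⁻¹ := by
          exact mul_le_mul' (mul_le_mul' h1 (by norm_num)) h2
  have hC0 : C ≠ 0 := fun h => by simp [h] at hC1
  have hCtop : C < ∞ := by
    refine ENNReal.mul_lt_top (ENNReal.mul_lt_top ?_ (by norm_num)) ?_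
    · exact ENNReal.inv_lt_top.2 heta0
    · exact ENNReal.inv_lt_top.2 (tsub_pos_of_lt hr1)
  refine ⟨C, hCtop, ?_⟩
  intro w hw S hS R hR
  obtain ⟨hSd, E, hE, hEd⟩ := hS
  obtain ⟨k₀, m₀, rfl⟩ := hR
  rcases Nat.eq_zero_or_pos n with hn0 | hn
  · -- degenerate dimension 0
    subst hn0
    have hsub : ∀ q : {Q : Set (Fin 0 → ℝ) // Q ∈ S ∧ Q ⊆ dyadicCube 0 k₀ m₀},
        q.1 = dyadicCube 0 k₀ m₀ := by
      rintro ⟨Q, hQS, -⟩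
      obtain ⟨k, m, rfl⟩ := hSd Q hQS
      show dyadicCube 0 k m = dyadicCube 0 k₀ m₀
      rw [dyadic_univ, dyadic_univ]
    rcases isEmpty_or_nonempty {Q : Set (Fin 0 → ℝ) // Q ∈ S ∧ Q ⊆ dyadicCube 0 k₀ m₀} with he | hne
    · rw [tsum_empty]
      exact zero_le
    · obtain ⟨q0⟩ := hne
      have hsum : ∑' q : {Q : Set (Fin 0 → ℝ) // Q ∈ S ∧ Q ⊆ dyadicCube 0 k₀ m₀},
          (avg w q.1) ^ s * volume q.1
          = (avg w (dyadicCube 0 k₀ m₀)) ^ s * volume (dyadicCube 0 k₀ m₀) := by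
        rw [tsum_eq_single q0 (fun b hb =>
          absurd (Subtype.ext ((hsub b).trans (hsub q0).symm)) hb)]
        rw [hsub q0]
      rw [hsum]
      exact le_mul_of_one_le_left (zero_le) hC1
  -- main case
  set R := dyadicCube n k₀ m₀ with hRdef
  by_cases hm0 : mass w R = 0
  · have hzero : ∀ q : {Q : Set (Fin n → ℝ) // Q ∈ S ∧ Q ⊆ R},
        (avg w q.1) ^ s * volume q.1 = 0 := by
      rintro ⟨Q, hQS, hQR⟩
      have h1 : mass w Q = 0 := le_antisymm (hm0 ▸ mass_mono w hQR) (zero_le)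
      simp only [avg, h1, ENNReal.zero_div]
      rw [ENNReal.zero_rpow_of_pos hs0, zero_mul]
    calc ∑' q : {Q : Set (Fin n → ℝ) // Q ∈ S ∧ Q ⊆ R}, (avg w q.1) ^ s * volume q.1
        = 0 := by rw [tsum_congr hzero, tsum_zero]
      _ ≤ _ := zero_le
  by_cases hmtop : mass w R = ∞
  · have hA : avg w R = ∞ := by
      rw [avg, ENNReal.div_eq_top]
      exact Or.inr ⟨hmtop, dyadic_vol_ne_top n k₀ m₀⟩
    have : C * ((avg w R) ^ s * volume R) = ∞ := by
      rw [hA, ENNReal.top_rpow_of_pos hs0, ENNReal.top_mul (dyadic_vol_pos n k₀ m₀).ne',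
        ENNReal.mul_top hC0]
    rw [this]
    exact le_top
  -- nondegenerate case : 0 < mass < ∞
  set A : ℝ≥0∞ := avg w R with hAdef
  have hA0 : A ≠ 0 := (ENNReal.div_pos hm0 (dyadic_vol_ne_top n k₀ m₀)).ne'
  have hAtop : A ≠ ∞ := (ENNReal.div_lt_top hmtop (dyadic_vol_pos n k₀ m₀).ne').ne
  have hmassR : mass w R = A * volume R := by
    rw [hAdef, avg, ENNReal.div_mul_cancel (dyadic_vol_pos n k₀ m₀).ne'
      (dyadic_vol_ne_top n k₀ m₀)]
  -- the stratification index
  have havgtop : ∀ q : {Q : Set (Fin n → ℝ) // Q ∈ S ∧ Q ⊆ R}, avg w q.1 ≠ ∞ := by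
    rintro ⟨Q, hQS, hQR⟩
    obtain ⟨k, m, rfl⟩ := hSd Q hQS
    have h1 : mass w (dyadicCube n k m) ≠ ∞ := by
      intro h
      have h2 := mass_mono w hQR
      rw [h] at h2
      exact hmtop (top_le_iff.1 h2)
    exact (ENNReal.div_lt_top h1 (dyadic_vol_pos n k m).ne').ne
  have hne : ∀ q : {Q : Set (Fin n → ℝ) // Q ∈ S ∧ Q ⊆ R},
      {j : ℕ | avg w q.1 ≤ 2 ^ j * A}.Nonempty := by
    intro q
    obtain ⟨N, hN⟩ := ENNReal.exists_nat_gt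
      (ENNReal.div_lt_top (havgtop q) hA0).ne
    refine ⟨N, ?_⟩
    have h1 : avg w q.1 / A ≤ 2 ^ N := le_trans hN.le (by
      exact_mod_cast Nat.cast_le.2 (Nat.le_of_lt_succ (Nat.lt_succ_of_le N.lt_two_pow_self.le)))
    calc avg w q.1 = avg w q.1 / A * A := by
          rw [ENNReal.div_mul_cancel hA0 hAtop]
      _ ≤ 2 ^ N * A := mul_le_mul_left h1 _
  set ι : {Q : Set (Fin n → ℝ) // Q ∈ S ∧ Q ⊆ R} → ℕ :=
    fun q => sInf {j : ℕ | avg w q.1 ≤ 2 ^ j * A} with hι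
  have hι1 : ∀ q, avg w q.1 ≤ 2 ^ (ι q) * A := fun q => Nat.sInf_mem (hne q)
  have hι2 : ∀ q j, ι q = j + 1 → 2 ^ j * A < avg w q.1 := by
    intro q j hq
    have h1 : j ∉ {j : ℕ | avg w q.1 ≤ 2 ^ j * A} :=
      Nat.notMem_of_lt_sInf (show j < ι q by omega)
    exact not_le.1 h1
  -- decomposition into strata
  have hdecomp : ∑' q : {Q : Set (Fin n → ℝ) // Q ∈ S ∧ Q ⊆ R}, (avg w q.1) ^ s * volume q.1
      = ∑' (j : ℕ), ∑' q : {Q : Set (Fin n → ℝ) // Q ∈ S ∧ Q ⊆ R},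
          (if ι q = j then (avg w q.1) ^ s * volume q.1 else 0) := by
    rw [ENNReal.tsum_comm]
    refine tsum_congr fun q => ?_
    rw [tsum_eq_single (ι q) (fun b hb => if_neg fun h => hb h.symm), if_pos rfl]
  -- volume bound for each stratum
  have hvol : ∀ j : ℕ, ∑' q : {Q : Set (Fin n → ℝ) // Q ∈ S ∧ Q ⊆ R},
      (if ι q = j then volume q.1 else 0)
      ≤ eta⁻¹ * 2 * ((2:ℝ≥0∞) ^ j)⁻¹ * volume R := by
    intro j
    cases j with
    | zero =>
      have hTcount : {Q : Set (Fin n → ℝ) | Q ∈ S ∧ Q ⊆ R}.Countable :=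
        (countable_dyadic n).mono fun Q hQ => hSd Q hQ.1
      have h2 : ∑' q : {Q : Set (Fin n → ℝ) // Q ∈ S ∧ Q ⊆ R}, volume q.1
          ≤ eta⁻¹ * volume R := by
        have hb := measure_biUnion (μ := volume) hTcount
          (hEd.subset fun Q hQ => hQ.1) (fun Q hQ => (hE Q hQ.1).2.1)
        calc ∑' q : {Q : Set (Fin n → ℝ) // Q ∈ S ∧ Q ⊆ R}, volume q.1
            ≤ ∑' q : {Q : Set (Fin n → ℝ) // Q ∈ S ∧ Q ⊆ R}, eta⁻¹ * volume (E q.1) := by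
              refine ENNReal.tsum_le_tsum fun q => ?_
              obtain ⟨-, -, h3⟩ := hE q.1 q.2.1
              calc volume q.1 = eta⁻¹ * (eta * volume q.1) := by
                    rw [← mul_assoc, ENNReal.inv_mul_cancel heta0.ne' hetat, one_mul]
                _ ≤ eta⁻¹ * volume (E q.1) := mul_le_mul_right h3 _
          _ = eta⁻¹ * ∑' q : {Q : Set (Fin n → ℝ) // Q ∈ S ∧ Q ⊆ R}, volume (E q.1) :=
              ENNReal.tsum_mul_left
          _ = eta⁻¹ * volume (⋃ Q ∈ {Q : Set (Fin n → ℝ) | Q ∈ S ∧ Q ⊆ R}, E Q) :=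
              congrArg (eta⁻¹ * ·) hb.symm
          _ ≤ eta⁻¹ * volume R := by
              refine mul_le_mul_right (measure_mono ?_) _
              exact Set.iUnion₂_subset fun Q hQ => subset_trans (hE Q hQ.1).1 hQ.2
      calc ∑' q : {Q : Set (Fin n → ℝ) // Q ∈ S ∧ Q ⊆ R}, (if ι q = 0 then volume q.1 else 0)
          ≤ ∑' q : {Q : Set (Fin n → ℝ) // Q ∈ S ∧ Q ⊆ R}, volume q.1 := by
            refine ENNReal.tsum_le_tsum fun q => ?_
            split
            · exact le_refl _
            · exact zero_le
        _ ≤ eta⁻¹ * volume R := h2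
        _ ≤ eta⁻¹ * 2 * ((2:ℝ≥0∞) ^ (0:ℕ))⁻¹ * volume R := by
            rw [pow_zero, inv_one, mul_one]
            exact mul_le_mul_left (le_mul_of_one_le_right' (by norm_num)) _
    | succ j' =>
      have h1 : ∀ q : {Q : Set (Fin n → ℝ) // Q ∈ S ∧ Q ⊆ R},
          (if ι q = j' + 1 then volume q.1 else 0)
          ≤ (if ((2:ℝ≥0∞) ^ j' * A) < avg w q.1 then volume q.1 else 0) := by
        intro q
        by_cases hq : ι q = j' + 1
        · rw [if_pos hq, if_pos (hι2 q j' hq)]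
        · rw [if_neg hq]
          exact zero_le
      have h2 := stopping_sum hn heta0 hetat hSd hE hEd w ((2:ℝ≥0∞) ^ j' * A) k₀ m₀
      have ht0 : (2:ℝ≥0∞) ^ j' * A ≠ 0 :=
        mul_ne_zero (pow_ne_zero j' (by norm_num)) hA0
      have httop : (2:ℝ≥0∞) ^ j' * A ≠ ∞ :=
        ENNReal.mul_ne_top (ENNReal.pow_ne_top (by norm_num)) hAtop
      have h3 := ennreal_le_inv_mul ht0 httop
        (le_trans (mul_le_mul_right (ENNReal.tsum_le_tsum h1) _) h2)
      have halg : ((2:ℝ≥0∞) ^ j' * A)⁻¹ * (eta⁻¹ * mass w R)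
          = eta⁻¹ * 2 * ((2:ℝ≥0∞) ^ (j' + 1))⁻¹ * volume R := by
        have hAA : A⁻¹ * A = 1 := ENNReal.inv_mul_cancel hA0 hAtop
        have h22 : (2:ℝ≥0∞) * 2⁻¹ = 1 := ENNReal.mul_inv_cancel (by norm_num) (by norm_num)
        rw [hmassR, ENNReal.mul_inv (Or.inl (pow_ne_zero j' (by norm_num))) (Or.inr hA0),
          pow_succ, ENNReal.mul_inv (Or.inl (pow_ne_zero j' (by norm_num))) (Or.inr (by norm_num))]
        calc ((2:ℝ≥0∞) ^ j')⁻¹ * A⁻¹ * (eta⁻¹ * (A * volume R))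
            = (A⁻¹ * A) * (((2:ℝ≥0∞) ^ j')⁻¹ * eta⁻¹ * volume R) := by ring
          _ = ((2:ℝ≥0∞) ^ j')⁻¹ * eta⁻¹ * volume R := by rw [hAA, one_mul]
          _ = ((2:ℝ≥0∞) * 2⁻¹) * (((2:ℝ≥0∞) ^ j')⁻¹ * eta⁻¹ * volume R) := by
              rw [h22, one_mul]
          _ = eta⁻¹ * 2 * (((2:ℝ≥0∞) ^ j')⁻¹ * 2⁻¹) * volume R := by ring
      exact h3.trans_eq halg
  -- stratum bound
  have hstrat : ∀ j : ℕ, ∑' q : {Q : Set (Fin n → ℝ) // Q ∈ S ∧ Q ⊆ R},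
      (if ι q = j then (avg w q.1) ^ s * volume q.1 else 0)
      ≤ ((2:ℝ≥0∞) ^ j * A) ^ s * (eta⁻¹ * 2 * ((2:ℝ≥0∞) ^ j)⁻¹ * volume R) := by
    intro j
    have h1 : ∀ q : {Q : Set (Fin n → ℝ) // Q ∈ S ∧ Q ⊆ R},
        (if ι q = j then (avg w q.1) ^ s * volume q.1 else 0)
        ≤ ((2:ℝ≥0∞) ^ j * A) ^ s * (if ι q = j then volume q.1 else 0) := by
      intro q
      by_cases hq : ι q = j
      · rw [if_pos hq, if_pos hq]
        exact mul_le_mul_left (ENNReal.rpow_le_rpow (hq ▸ hι1 q) hs0.le) _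
      · rw [if_neg hq, if_neg hq, mul_zero]
    calc ∑' q : {Q : Set (Fin n → ℝ) // Q ∈ S ∧ Q ⊆ R},
        (if ι q = j then (avg w q.1) ^ s * volume q.1 else 0)
        ≤ ∑' q : {Q : Set (Fin n → ℝ) // Q ∈ S ∧ Q ⊆ R},
            ((2:ℝ≥0∞) ^ j * A) ^ s * (if ι q = j then volume q.1 else 0) :=
          ENNReal.tsum_le_tsum h1
      _ = ((2:ℝ≥0∞) ^ j * A) ^ s * ∑' q : {Q : Set (Fin n → ℝ) // Q ∈ S ∧ Q ⊆ R},
            (if ι q = j then volume q.1 else 0) := ENNReal.tsum_mul_left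
      _ ≤ _ := mul_le_mul_right (hvol j) _
  -- geometric computation
  have hgeom : ∀ j : ℕ, ((2:ℝ≥0∞) ^ j * A) ^ s * (eta⁻¹ * 2 * ((2:ℝ≥0∞) ^ j)⁻¹ * volume R)
      = (eta⁻¹ * 2 * (A ^ s * volume R)) * r ^ j := by
    intro j
    have key : ((2:ℝ≥0∞) ^ j) ^ s * ((2:ℝ≥0∞) ^ j)⁻¹ = r ^ j := by
      rw [← ENNReal.rpow_natCast 2 j, ← ENNReal.rpow_mul, ← ENNReal.rpow_neg,
        ← ENNReal.rpow_add _ _ (by norm_num) (by norm_num), hrdef,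
        ← ENNReal.rpow_natCast ((2:ℝ≥0∞) ^ (s - 1)) j, ← ENNReal.rpow_mul]
      congr 1
      ring
    rw [ENNReal.mul_rpow_of_nonneg _ _ hs0.le]
    calc ((2:ℝ≥0∞) ^ j) ^ s * A ^ s * (eta⁻¹ * 2 * ((2:ℝ≥0∞) ^ j)⁻¹ * volume R)
        = (((2:ℝ≥0∞) ^ j) ^ s * ((2:ℝ≥0∞) ^ j)⁻¹) * (A ^ s * (eta⁻¹ * 2 * volume R)) := by ring
      _ = r ^ j * (A ^ s * (eta⁻¹ * 2 * volume R)) := by rw [key]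
      _ = (eta⁻¹ * 2 * (A ^ s * volume R)) * r ^ j := by ring
  -- assembling
  calc ∑' q : {Q : Set (Fin n → ℝ) // Q ∈ S ∧ Q ⊆ R}, (avg w q.1) ^ s * volume q.1
      = ∑' (j : ℕ), ∑' q : {Q : Set (Fin n → ℝ) // Q ∈ S ∧ Q ⊆ R},
          (if ι q = j then (avg w q.1) ^ s * volume q.1 else 0) := hdecomp
    _ ≤ ∑' (j : ℕ), (eta⁻¹ * 2 * (A ^ s * volume R)) * r ^ j :=
        ENNReal.tsum_le_tsum fun j => (hstrat j).trans_eq (hgeom j)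
    _ = (eta⁻¹ * 2 * (A ^ s * volume R)) * ∑' (j : ℕ), r ^ j := ENNReal.tsum_mul_left
    _ = C * (A ^ s * volume R) := by
        rw [ENNReal.tsum_geometric, hCdef]
        ring
end
end

section
/- Let S be an η-sparse family of dyadic cubes, σ a weight, R ∈ S, λ ≥ 1 a constant, and let F_λ = {Q ∈ S : ∫_Q M(σχ_Q) ≤ λ σ(Q)}, where M is the Hardy–Littlewood maximal operator. Then ∑_{Q ∈ F_λ, Q ⊆ R} σ(Q) ≤ C λ σ(R), with C depending only on η and n. More precisely, if λ_Q(σ) = (∫_Q M(σχ_Q))/σ(Q) and F_k = {Q ∈ S : 2^k ≤ λ_Q(σ) ≤ 2^{k+1}}, then ∑_{Q ∈ F_k, Q ⊆ R} σ(Q) ≤ C 2^k σ(R). -/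
open MeasureTheory Set
open scoped ENNReal

noncomputable section

namespace Statement6Aux

open scoped Classical

lemma two_zpow_pos (k : ℤ) : (0:ℝ) < (2:ℝ) ^ k := zpow_pos (by norm_num) k

lemma dyadicCube_eq_pi (n : ℕ) (k : ℤ) (m : Fin n → ℤ) :
    dyadicCube n k m =
      Set.pi Set.univ (fun i => Set.Ico ((m i : ℝ) * (2:ℝ)^k) (((m i : ℝ) + 1) * (2:ℝ)^k)) := by
  ext x
  simp [dyadicCube, Set.mem_pi, Set.mem_Ico]

lemma dyadicCube_measurable (n : ℕ) (k : ℤ) (m : Fin n → ℤ) :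
    MeasurableSet (dyadicCube n k m) := by
  rw [dyadicCube_eq_pi]
  exact MeasurableSet.univ_pi fun i => measurableSet_Ico

lemma dyadicCube_volume (n : ℕ) (k : ℤ) (m : Fin n → ℤ) :
    volume (dyadicCube n k m) = (ENNReal.ofReal ((2:ℝ)^k)) ^ n := by
  rw [dyadicCube_eq_pi, volume_pi_pi]
  have : ∀ i : Fin n, volume (Set.Ico ((m i : ℝ) * (2:ℝ)^k) (((m i : ℝ) + 1) * (2:ℝ)^k))
      = ENNReal.ofReal ((2:ℝ)^k) := by
    intro i
    rw [Real.volume_Ico]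
    congr 1
    ring
  simp only [this, Finset.prod_const, Finset.card_univ, Fintype.card_fin]

lemma dyadicCube_volume_ne_zero (n : ℕ) (k : ℤ) (m : Fin n → ℤ) :
    volume (dyadicCube n k m) ≠ 0 := by
  rw [dyadicCube_volume]
  exact pow_ne_zero _ (by simp [ENNReal.ofReal_pos, two_zpow_pos k] : ENNReal.ofReal ((2:ℝ)^k) ≠ 0)

lemma dyadicCube_volume_ne_top (n : ℕ) (k : ℤ) (m : Fin n → ℤ) :
    volume (dyadicCube n k m) ≠ ⊤ := by
  rw [dyadicCube_volume]
  exact ENNReal.pow_ne_top ENNReal.ofReal_ne_top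

lemma isCube_dyadicCube (n : ℕ) (k : ℤ) (m : Fin n → ℤ) : IsCube (dyadicCube n k m) := by
  refine ⟨fun i => (m i : ℝ) * (2:ℝ)^k, (2:ℝ)^k, two_zpow_pos k, ?_⟩
  ext x
  simp only [dyadicCube, mem_setOf_eq]
  refine forall_congr' fun i => ?_
  rw [show ((m i : ℝ) + 1) * (2:ℝ)^k = (m i : ℝ) * (2:ℝ)^k + (2:ℝ)^k by ring]

lemma dyadic1 {k k' : ℤ} (hk : k ≤ k') {m m' : ℤ} {x : ℝ}
    (h1 : (m:ℝ) * (2:ℝ)^k ≤ x) (h2 : x < ((m:ℝ)+1) * (2:ℝ)^k)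
    (h3 : (m':ℝ) * (2:ℝ)^k' ≤ x) (h4 : x < ((m':ℝ)+1) * (2:ℝ)^k') :
    (m':ℝ) * (2:ℝ)^k' ≤ (m:ℝ) * (2:ℝ)^k ∧ ((m:ℝ)+1) * (2:ℝ)^k ≤ ((m':ℝ)+1) * (2:ℝ)^k' := by
  obtain ⟨d, rfl⟩ : ∃ d : ℕ, k' = k + d := ⟨(k' - k).toNat, by omega⟩
  have h2k : (0:ℝ) < (2:ℝ)^k := two_zpow_pos k
  have hpow : (2:ℝ)^(k + (d:ℤ)) = (2:ℝ)^k * (2:ℝ)^(d:ℕ) := by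
    rw [zpow_add₀ (by norm_num : (2:ℝ) ≠ 0)]
    norm_num
  rw [hpow] at h3 h4 ⊢
  have hdpos : (0:ℝ) < (2:ℝ)^(d:ℕ) := by positivity
  have hA : (m' * 2^d : ℤ) ≤ m := by
    have hlt : ((m' * 2^d : ℤ) : ℝ) < (m:ℝ) + 1 := by
      push_cast
      nlinarith
    have : (m' * 2^d : ℤ) < m + 1 := by exact_mod_cast hlt
    omega
  have hB : (m + 1 : ℤ) ≤ (m' + 1) * 2^d := by
    have hlt : (m:ℝ) < (((m' + 1) * 2^d : ℤ) : ℝ) := by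
      push_cast
      nlinarith
    have : m < (m' + 1) * 2^d := by exact_mod_cast hlt
    omega
  constructor
  · have : ((m' * 2^d : ℤ) : ℝ) ≤ (m:ℝ) := by exact_mod_cast hA
    push_cast at this
    nlinarith
  · have : ((m + 1 : ℤ) : ℝ) ≤ (((m' + 1) * 2^d : ℤ) : ℝ) := by exact_mod_cast hB
    push_cast at this
    nlinarith

lemma dyadic_subset {n : ℕ} {k k' : ℤ} {m m' : Fin n → ℤ} (hk : k ≤ k')
    {x : Fin n → ℝ} (hx : x ∈ dyadicCube n k m) (hx' : x ∈ dyadicCube n k' m') :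
    dyadicCube n k m ⊆ dyadicCube n k' m' := by
  intro y hy i
  obtain ⟨l, r⟩ := dyadic1 hk (hx i).1 (hx i).2 (hx' i).1 (hx' i).2
  exact ⟨le_trans l (hy i).1, lt_of_lt_of_le (hy i).2 r⟩

lemma dyadic_subset_or {n : ℕ} {Q Q' : Set (Fin n → ℝ)}
    (hQ : IsDyadicCube Q) (hQ' : IsDyadicCube Q') (h : ¬ Disjoint Q Q') :
    Q ⊆ Q' ∨ Q' ⊆ Q := by
  obtain ⟨k, m, rfl⟩ := hQ
  obtain ⟨k', m', rfl⟩ := hQ'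
  rw [Set.not_disjoint_iff] at h
  obtain ⟨x, hx, hx'⟩ := h
  rcases le_total k k' with hk | hk
  · exact Or.inl (dyadic_subset hk hx hx')
  · exact Or.inr (dyadic_subset hk hx' hx)

lemma le_maximalOp {n : ℕ} (f : (Fin n → ℝ) → ℝ≥0∞) {Q : Set (Fin n → ℝ)}
    (hQ : IsCube Q) {x : Fin n → ℝ} (hx : x ∈ Q) :
    avg f Q ≤ maximalOp f x := by
  have h : avg f Q = ⨆ (_ : IsCube Q), ⨆ (_ : x ∈ Q), avg f Q := by
    rw [iSup_pos hQ, iSup_pos hx]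
  rw [h]
  exact le_iSup (fun Q => ⨆ (_ : IsCube Q), ⨆ (_ : x ∈ Q), avg f Q) Q

lemma local_sum {n : ℕ} {eta : ℝ≥0∞} (σ : (Fin n → ℝ) → ℝ≥0∞)
    {S : Set (Set (Fin n → ℝ))} (hdy : ∀ Q ∈ S, IsDyadicCube Q)
    (E : Set (Fin n → ℝ) → Set (Fin n → ℝ))
    (hE : ∀ Q ∈ S, E Q ⊆ Q ∧ MeasurableSet (E Q) ∧ eta * volume Q ≤ volume (E Q))
    (hdisj : S.PairwiseDisjoint E)
    {P : Set (Fin n → ℝ)} (hP : P ∈ S)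
    (G : Finset (Set (Fin n → ℝ))) (hG : ∀ Q ∈ G, Q ∈ S ∧ Q ⊆ P) :
    eta * ∑ Q ∈ G, mass σ Q ≤ mass (maximalOp (P.indicator σ)) P := by
  have key : ∀ Q ∈ G, eta * mass σ Q ≤ ∫⁻ x in E Q, maximalOp (P.indicator σ) x := by
    intro Q hQG
    obtain ⟨hQS, hQP⟩ := hG Q hQG
    obtain ⟨k, m, hkm⟩ := hdy Q hQS
    have hvol0 : volume Q ≠ 0 := by rw [hkm]; exact dyadicCube_volume_ne_zero n k m
    have hvolt : volume Q ≠ ⊤ := by rw [hkm]; exact dyadicCube_volume_ne_top n k m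
    have hQmeas : MeasurableSet Q := by rw [hkm]; exact dyadicCube_measurable n k m
    have havg : avg (P.indicator σ) Q = mass σ Q / volume Q := by
      unfold avg mass
      congr 1
      exact setLIntegral_congr_fun_ae hQmeas
        (ae_of_all _ fun x hx => Set.indicator_of_mem (hQP hx) σ)
    have hlb : ∀ x ∈ E Q, mass σ Q / volume Q ≤ maximalOp (P.indicator σ) x := by
      intro x hx
      rw [← havg]
      exact le_maximalOp _ (hkm ▸ isCube_dyadicCube n k m) ((hE Q hQS).1 hx)
    calc eta * mass σ Q = eta * (volume Q * (mass σ Q / volume Q)) := by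
            rw [ENNReal.mul_div_cancel hvol0 hvolt]
      _ = (eta * volume Q) * (mass σ Q / volume Q) := by ring
      _ ≤ volume (E Q) * (mass σ Q / volume Q) :=
            mul_le_mul_left (hE Q hQS).2.2 _
      _ = ∫⁻ _ in E Q, (mass σ Q / volume Q) := by
            rw [setLIntegral_const]; ring
      _ ≤ ∫⁻ x in E Q, maximalOp (P.indicator σ) x :=
            setLIntegral_mono' (hE Q hQS).2.1 hlb
  calc eta * ∑ Q ∈ G, mass σ Q = ∑ Q ∈ G, eta * mass σ Q := Finset.mul_sum _ _ _
    _ ≤ ∑ Q ∈ G, ∫⁻ x in E Q, maximalOp (P.indicator σ) x := Finset.sum_le_sum key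
    _ = ∫⁻ x in ⋃ Q ∈ G, E Q, maximalOp (P.indicator σ) x := by
          rw [lintegral_biUnion_finset (hdisj.subset fun Q hQ => (hG Q hQ).1)
            (fun Q hQ => (hE Q (hG Q hQ).1).2.1)]
    _ ≤ ∫⁻ x in P, maximalOp (P.indicator σ) x := by
          apply lintegral_mono_set
          intro x hx
          simp only [Set.mem_iUnion] at hx
          obtain ⟨Q, hQG, hxE⟩ := hx
          exact (hG Q hQG).2 ((hE Q (hG Q hQG).1).1 hxE)
    _ = mass (maximalOp (P.indicator σ)) P := rfl

lemma main_finset {n : ℕ} {eta : ℝ≥0∞} (heta0 : 0 < eta) (heta1 : eta ≤ 1)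
    (σ : (Fin n → ℝ) → ℝ≥0∞) (hσ : Measurable σ)
    {S : Set (Set (Fin n → ℝ))} (hS : IsSparse eta S)
    {R : Set (Fin n → ℝ)} (hR : R ∈ S) (lam : ℝ≥0∞)
    (F : Finset (Set (Fin n → ℝ)))
    (hF : ∀ Q ∈ F, Q ∈ S ∧ Q ⊆ R ∧
      mass (maximalOp (Q.indicator σ)) Q ≤ lam * mass σ Q) :
    ∑ Q ∈ F, mass σ Q ≤ eta⁻¹ * lam * mass σ R := by
  obtain ⟨hdy, E, hE, hdisj⟩ := hS
  -- maximal predicate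
  set maxP : Set (Fin n → ℝ) → Prop := fun P => P ∈ F ∧ ∀ Q' ∈ F, P ⊆ Q' → Q' = P with hmaxP
  -- choice of a maximal cube above each cube of F
  have hex : ∀ Q ∈ F, ∃ P, maxP P ∧ Q ⊆ P := by
    intro Q hQ
    have hfin : ({P | P ∈ F ∧ Q ⊆ P} : Set (Set (Fin n → ℝ))).Finite :=
      F.finite_toSet.subset fun P hP => hP.1
    obtain ⟨P, hPmem, hPmax⟩ := (show ∃ P ∈ ({P | P ∈ F ∧ Q ⊆ P} : Set (Set (Fin n → ℝ))),
        ∀ P' ∈ ({P | P ∈ F ∧ Q ⊆ P} : Set (Set (Fin n → ℝ))), id P ≤ id P' → id P = id P' by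
      obtain ⟨P, hP⟩ := hfin.exists_maximal ⟨Q, hQ, subset_rfl⟩
      exact ⟨P, hP.1, fun P' hP' h => le_antisymm h (hP.2 hP' h)⟩)
    refine ⟨P, ⟨hPmem.1, fun Q' hQ' hPQ' => ?_⟩, hPmem.2⟩
    exact (hPmax Q' ⟨hQ', hPmem.2.trans hPQ'⟩ hPQ').symm
  set g : Set (Fin n → ℝ) → Set (Fin n → ℝ) := fun Q =>
    if h : ∃ P, maxP P ∧ Q ⊆ P then h.choose else Q with hg
  have hgF : ∀ Q ∈ F, maxP (g Q) ∧ Q ⊆ g Q := by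
    intro Q hQ
    have h := hex Q hQ
    simp only [hg, dif_pos h]
    exact h.choose_spec
  set Mx : Finset (Set (Fin n → ℝ)) := F.filter maxP with hMx
  have hmaps : ∀ Q ∈ F, g Q ∈ Mx := by
    intro Q hQ
    exact Finset.mem_filter.mpr ⟨(hgF Q hQ).1.1, (hgF Q hQ).1⟩
  have hsplit : ∑ Q ∈ F, mass σ Q
      = ∑ P ∈ Mx, ∑ Q ∈ F.filter (fun Q => g Q = P), mass σ Q :=
    (Finset.sum_fiberwise_of_maps_to hmaps _).symm
  rw [hsplit]
  have hinner : ∀ P ∈ Mx, ∑ Q ∈ F.filter (fun Q => g Q = P), mass σ Q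
      ≤ eta⁻¹ * (lam * mass σ P) := by
    intro P hPMx
    obtain ⟨hPF, hPmax⟩ := Finset.mem_filter.mp hPMx
    have hPS : P ∈ S := (hF P hPF).1
    have hloc := local_sum σ hdy E hE hdisj hPS (F.filter (fun Q => g Q = P))
      (fun Q hQ => by
        obtain ⟨hQF, hQg⟩ := Finset.mem_filter.mp hQ
        exact ⟨(hF Q hQF).1, hQg ▸ (hgF Q hQF).2⟩)
    have hchain : eta * ∑ Q ∈ F.filter (fun Q => g Q = P), mass σ Q ≤ lam * mass σ P :=
      hloc.trans (hF P hPF).2.2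
    calc ∑ Q ∈ F.filter (fun Q => g Q = P), mass σ Q
        = eta⁻¹ * (eta * ∑ Q ∈ F.filter (fun Q => g Q = P), mass σ Q) := by
          rw [← mul_assoc, ENNReal.inv_mul_cancel heta0.ne' (heta1.trans_lt ENNReal.one_lt_top).ne,
            one_mul]
      _ ≤ eta⁻¹ * (lam * mass σ P) := mul_le_mul_right hchain _
  calc ∑ P ∈ Mx, ∑ Q ∈ F.filter (fun Q => g Q = P), mass σ Q
      ≤ ∑ P ∈ Mx, eta⁻¹ * (lam * mass σ P) := Finset.sum_le_sum hinner
    _ = eta⁻¹ * lam * ∑ P ∈ Mx, mass σ P := by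
        rw [Finset.mul_sum]; refine Finset.sum_congr rfl fun P _ => by ring
    _ ≤ eta⁻¹ * lam * mass σ R := by
        refine mul_le_mul_right ?_ _
        -- sum over maximal cubes ≤ mass σ R via disjointness
        have hmeasQ : ∀ P ∈ Mx, MeasurableSet P := by
          intro P hP
          obtain ⟨k, m, hkm⟩ := hdy P (hF P (Finset.mem_filter.mp hP).1).1
          rw [hkm]; exact dyadicCube_measurable n k m
        have hdisjMx : (↑Mx : Set (Set (Fin n → ℝ))).PairwiseDisjoint id := by
          intro P hP P' hP' hne
          obtain ⟨hPF, hPmax⟩ := Finset.mem_filter.mp (by exact_mod_cast hP)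
          obtain ⟨hP'F, hP'max⟩ := Finset.mem_filter.mp (by exact_mod_cast hP')
          by_contra hnd
          rcases dyadic_subset_or (hdy P (hF P hPF).1) (hdy P' (hF P' hP'F).1) hnd with hsub | hsub
          · exact hne ((hPmax.2 P' hP'F hsub).symm)
          · exact hne ((hP'max.2 P hPF hsub))
        set μ : Measure (Fin n → ℝ) := volume.withDensity σ with hμ
        have hmass : ∀ P ∈ Mx, mass σ P = μ P := by
          intro P hP
          rw [hμ, withDensity_apply σ (hmeasQ P hP)]
          rfl
        have hmassR : mass σ R = μ R := by
          obtain ⟨k, m, hkm⟩ := hdy R hR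
          rw [hμ, withDensity_apply σ (by rw [hkm]; exact dyadicCube_measurable n k m)]
          rfl
        calc ∑ P ∈ Mx, mass σ P = ∑ P ∈ Mx, μ P := Finset.sum_congr rfl hmass
          _ = μ (⋃ P ∈ Mx, P) := (measure_biUnion_finset hdisjMx hmeasQ).symm
          _ ≤ μ R := by
              apply measure_mono
              intro x hx
              simp only [Set.mem_iUnion] at hx
              obtain ⟨P, hPMx, hxP⟩ := hx
              exact (hF P (Finset.mem_filter.mp hPMx).1).2.1 hxP
          _ = mass σ R := hmassR.symm

end Statement6Aux

open Statement6Aux in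
theorem statement6 (eta : ℝ≥0∞) (heta0 : 0 < eta) (heta1 : eta ≤ 1) (n : ℕ) :
    ∃ C : ℝ≥0∞, C < ∞ ∧
      ∀ (σ : (Fin n → ℝ) → ℝ≥0∞), Measurable σ →
      ∀ (S : Set (Set (Fin n → ℝ))), IsSparse eta S →
      (∀ Q ∈ S, 0 < mass σ Q) →
      ∀ R ∈ S,
      (∀ lam : ℝ≥0∞, 1 ≤ lam →
        ∑' Q : {Q : Set (Fin n → ℝ) // Q ∈ S ∧ Q ⊆ R ∧
            mass (maximalOp (Q.indicator σ)) Q ≤ lam * mass σ Q},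
          mass σ Q.1 ≤ C * lam * mass σ R) ∧
      (∀ k : ℕ,
        ∑' Q : {Q : Set (Fin n → ℝ) // Q ∈ S ∧ Q ⊆ R ∧
            (2:ℝ≥0∞) ^ (k:ℝ) * mass σ Q ≤ mass (maximalOp (Q.indicator σ)) Q ∧
            mass (maximalOp (Q.indicator σ)) Q ≤ (2:ℝ≥0∞) ^ ((k:ℝ)+1) * mass σ Q},
          mass σ Q.1 ≤ C * (2:ℝ≥0∞) ^ (k:ℝ) * mass σ R) := by
  classical
  refine ⟨2 * eta⁻¹, ?_, ?_⟩
  · exact ENNReal.mul_lt_top (by norm_num) (ENNReal.inv_lt_top.mpr heta0)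
  · intro σ hσ S hS hpos R hR
    constructor
    · intro lam hlam
      rw [ENNReal.tsum_eq_iSup_sum]
      refine iSup_le fun s => ?_
      have himg : ∑ Q ∈ s.image Subtype.val, mass σ Q = ∑ a ∈ s, mass σ a.1 :=
        Finset.sum_image (fun a _ b _ h => Subtype.ext h)
      rw [← himg]
      have hmain := main_finset heta0 heta1 σ hσ hS hR lam (s.image Subtype.val)
        (fun Q hQ => by
          obtain ⟨a, _, rfl⟩ := Finset.mem_image.mp hQ
          exact a.2)
      refine hmain.trans ?_
      refine mul_le_mul_left (mul_le_mul_left ?_ _) _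
      calc eta⁻¹ = 1 * eta⁻¹ := (one_mul _).symm
        _ ≤ 2 * eta⁻¹ := mul_le_mul_left one_le_two _
    · intro k
      rw [ENNReal.tsum_eq_iSup_sum]
      refine iSup_le fun s => ?_
      have himg : ∑ Q ∈ s.image Subtype.val, mass σ Q = ∑ a ∈ s, mass σ a.1 :=
        Finset.sum_image (fun a _ b _ h => Subtype.ext h)
      rw [← himg]
      have hmain := main_finset heta0 heta1 σ hσ hS hR ((2:ℝ≥0∞) ^ ((k:ℝ)+1))
        (s.image Subtype.val)
        (fun Q hQ => by
          obtain ⟨a, _, rfl⟩ := Finset.mem_image.mp hQ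
          exact ⟨a.2.1, a.2.2.1, a.2.2.2.2⟩)
      refine hmain.trans (le_of_eq ?_)
      rw [ENNReal.rpow_add (k:ℝ) 1 (by norm_num) (by norm_num), ENNReal.rpow_one]
      ring
end
end

section
/- Let S be an η-sparse family of dyadic cubes, σ a weight with σ_Q ≥ 1 for all Q ∈ S, and w a weight. Fix Q ∈ S and let 2 ≤ p < ∞. Set [w,σ]_{A_p} = sup_{Q' ∈ S} w_{Q'} σ_{Q'}^{p-1} and suppose it is finite and positive. For k ≥ 1, let E_k = {Q' ∈ S : Q' ⊆ Q, σ_{Q'} ≤ σ_Q^{1/2}, 2^{k-1}[w,σ]_{A_p} ψ(σ_Q)^{-1} < w_{Q'} σ_{Q'}^{p-1} ≤ 2^k [w,σ]_{A_p} ψ(σ_Q)^{-1}}, where ψ : [1,∞) → (0,∞) is increasing. Then ∑_{Q' ∈ E_k} σ_{Q'} w(Q') ≤ C σ_Q^{1/2} w(Q), with C depending only on η, p, n. -/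
open MeasureTheory Set
open scoped ENNReal

noncomputable section

namespace Aux

variable {n : ℕ}

lemma dc_eq_pi (k : ℤ) (m : Fin n → ℤ) :
    dyadicCube n k m =
      Set.pi Set.univ (fun i => Set.Ico ((m i : ℝ) * 2 ^ k) (((m i : ℝ) + 1) * 2 ^ k)) := by
  ext x; simp [dyadicCube, Set.mem_pi]

lemma dc_measurable (k : ℤ) (m : Fin n → ℤ) : MeasurableSet (dyadicCube n k m) := by
  rw [dc_eq_pi]; exact MeasurableSet.univ_pi fun i => measurableSet_Ico

lemma dc_volume (k : ℤ) (m : Fin n → ℤ) :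
    volume (dyadicCube n k m) = ENNReal.ofReal ((2:ℝ) ^ k) ^ n := by
  rw [dc_eq_pi, volume_pi_pi]
  have : ∀ i : Fin n, volume (Set.Ico ((m i : ℝ) * 2 ^ k) (((m i : ℝ) + 1) * 2 ^ k))
      = ENNReal.ofReal ((2:ℝ) ^ k) := by
    intro i; rw [Real.volume_Ico]; congr 1; ring
  simp [this]

lemma dc_vol_pos (k : ℤ) (m : Fin n → ℤ) : 0 < volume (dyadicCube n k m) := by
  rw [dc_volume]
  exact ENNReal.pow_pos (ENNReal.ofReal_pos.2 (by positivity)) n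

lemma dc_vol_lt_top (k : ℤ) (m : Fin n → ℤ) : volume (dyadicCube n k m) < ∞ := by
  rw [dc_volume]
  exact ENNReal.pow_lt_top ENNReal.ofReal_lt_top

lemma dc_nonempty (k : ℤ) (m : Fin n → ℤ) : (dyadicCube n k m).Nonempty := by
  refine ⟨fun i => (m i : ℝ) * 2 ^ k, fun i => ⟨le_refl _, ?_⟩⟩
  have h2k : (0:ℝ) < 2 ^ k := by positivity
  simp only []
  nlinarith [h2k]

end Aux

namespace Aux

lemma dc_nested {n : ℕ} {k k' : ℤ} {m m' : Fin n → ℤ} (hkk : k ≤ k')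
    {x : Fin n → ℝ} (hx : x ∈ dyadicCube n k m) (hx' : x ∈ dyadicCube n k' m') :
    dyadicCube n k m ⊆ dyadicCube n k' m' := by
  intro y hy i
  have h2k : (0:ℝ) < 2 ^ k := by positivity
  obtain ⟨h1, h2⟩ := hx i
  obtain ⟨h1', h2'⟩ := hx' i
  obtain ⟨g1, g2⟩ := hy i
  set e := (k' - k).toNat with he
  have heZ : (e : ℤ) = k' - k := Int.toNat_of_nonneg (by omega)
  have hke : (2:ℝ) ^ k' = 2 ^ e * 2 ^ k := by
    rw [← zpow_natCast (2:ℝ) e, ← zpow_add₀ (two_ne_zero), heZ]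
    congr 1; ring
  have h2e : (0:ℝ) < 2 ^ e := by positivity
  have key1 : m' i * (2:ℤ) ^ e ≤ m i := by
    have hr : ((m' i * (2:ℤ) ^ e : ℤ) : ℝ) * 2 ^ k < ((m i : ℝ) + 1) * 2 ^ k := by
      push_cast
      calc (m' i : ℝ) * 2 ^ e * 2 ^ k = (m' i : ℝ) * 2 ^ k' := by rw [hke]; ring
        _ ≤ x i := h1'
        _ < _ := h2
    have : ((m' i * (2:ℤ) ^ e : ℤ) : ℝ) < (m i : ℝ) + 1 :=
      lt_of_mul_lt_mul_right (by linarith) (le_of_lt h2k)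
    have : (m' i * (2:ℤ) ^ e : ℤ) < m i + 1 := by exact_mod_cast this
    omega
  have key2 : m i + 1 ≤ (m' i + 1) * (2:ℤ) ^ e := by
    have hr : ((m i : ℝ)) * 2 ^ k < (((m' i + 1) * (2:ℤ) ^ e : ℤ) : ℝ) * 2 ^ k := by
      push_cast
      calc (m i : ℝ) * 2 ^ k ≤ x i := h1
        _ < ((m' i : ℝ) + 1) * 2 ^ k' := h2'
        _ = ((m' i : ℝ) + 1) * 2 ^ e * 2 ^ k := by rw [hke]; ring
    have : (m i : ℝ) < (((m' i + 1) * (2:ℤ) ^ e : ℤ) : ℝ) :=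
      lt_of_mul_lt_mul_right (by linarith) (le_of_lt h2k)
    have : (m i : ℤ) < (m' i + 1) * (2:ℤ) ^ e := by exact_mod_cast this
    omega
  constructor
  · calc (m' i : ℝ) * 2 ^ k' = ((m' i * (2:ℤ) ^ e : ℤ) : ℝ) * 2 ^ k := by
          push_cast; rw [hke]; ring
      _ ≤ (m i : ℝ) * 2 ^ k := by
          have : ((m' i * (2:ℤ) ^ e : ℤ) : ℝ) ≤ (m i : ℝ) := by exact_mod_cast key1
          nlinarith
      _ ≤ y i := g1
  · calc y i < ((m i : ℝ) + 1) * 2 ^ k := g2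
      _ ≤ (((m' i + 1) * (2:ℤ) ^ e : ℤ) : ℝ) * 2 ^ k := by
          have : ((m i : ℝ) + 1) ≤ (((m' i + 1) * (2:ℤ) ^ e : ℤ) : ℝ) := by exact_mod_cast key2
          nlinarith
      _ = ((m' i : ℝ) + 1) * 2 ^ k' := by push_cast; rw [hke]; ring

lemma nested_or_nested {n : ℕ} {P R : Set (Fin n → ℝ)} (hP : IsDyadicCube P)
    (hR : IsDyadicCube R) (hne : (P ∩ R).Nonempty) : P ⊆ R ∨ R ⊆ P := by
  obtain ⟨k, m, rfl⟩ := hP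
  obtain ⟨k', m', rfl⟩ := hR
  obtain ⟨x, hx, hx'⟩ := hne
  rcases le_total k k' with h | h
  · exact Or.inl (dc_nested h hx hx')
  · exact Or.inr (dc_nested h hx' hx)

lemma dc_rep_of_mem {n : ℕ} {k : ℤ} {m : Fin n → ℤ} {x : Fin n → ℝ}
    (hx : x ∈ dyadicCube n k m) : m = fun i => ⌊x i / 2 ^ k⌋ := by
  funext i
  obtain ⟨h1, h2⟩ := hx i
  have h2k : (0:ℝ) < 2 ^ k := by positivity
  symm
  rw [Int.floor_eq_iff]
  constructor
  · rw [le_div_iff₀ h2k]; linarith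
  · rw [div_lt_iff₀ h2k]; linarith

lemma scale_le {n : ℕ} (hn : 0 < n) {k k' : ℤ} {m m' : Fin n → ℤ}
    (h : dyadicCube n k m ⊆ dyadicCube n k' m') : k ≤ k' := by
  have hv := measure_mono (μ := volume) h
  rw [dc_volume, dc_volume] at hv
  rw [← ENNReal.ofReal_pow (by positivity), ← ENNReal.ofReal_pow (by positivity)] at hv
  rw [ENNReal.ofReal_le_ofReal_iff (by positivity)] at hv
  by_contra hc
  push_neg at hc
  have h1 : (2:ℝ) ^ k' < 2 ^ k := by
    apply zpow_lt_zpow_right₀ (by norm_num) hc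
  have := pow_lt_pow_left₀ h1 (by positivity) hn.ne'
  linarith

end Aux

namespace Aux

lemma dc_univ_of_zero {k : ℤ} {m : Fin 0 → ℤ} : dyadicCube 0 k m = Set.univ := by
  ext x; simp [dyadicCube]

lemma finite_between {n : ℕ} {Q' Q : Set (Fin n → ℝ)} (hQ' : IsDyadicCube Q')
    (hQ : IsDyadicCube Q) : {P | IsDyadicCube P ∧ Q' ⊆ P ∧ P ⊆ Q}.Finite := by
  rcases Nat.eq_zero_or_pos n with hn | hn
  · subst hn
    apply Set.Finite.subset (Set.finite_singleton (Set.univ : Set (Fin 0 → ℝ)))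
    rintro P ⟨⟨k, m, rfl⟩, -, -⟩
    simp [dc_univ_of_zero]
  · obtain ⟨k₁, m₁, rfl⟩ := hQ'
    obtain ⟨k₂, m₂, rfl⟩ := hQ
    obtain ⟨x₀, hx₀⟩ := dc_nonempty k₁ m₁
    apply Set.Finite.subset ((Set.finite_Icc k₁ k₂).image
      (fun k => dyadicCube n k (fun i => ⌊x₀ i / 2 ^ k⌋)))
    rintro P ⟨⟨k, m, rfl⟩, hsub1, hsub2⟩
    refine ⟨k, ⟨scale_le hn hsub1, scale_le hn hsub2⟩, ?_⟩
    rw [dc_rep_of_mem (hsub1 hx₀)]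

lemma exists_maximal {n : ℕ} {F : Set (Set (Fin n → ℝ))} {Q : Set (Fin n → ℝ)}
    (hQ : IsDyadicCube Q) (hF : ∀ P ∈ F, IsDyadicCube P ∧ P ⊆ Q)
    {Q' : Set (Fin n → ℝ)} (hQ' : Q' ∈ F) :
    ∃ P ∈ F, Q' ⊆ P ∧ ∀ R ∈ F, P ⊆ R → P = R := by
  classical
  set D := {P ∈ F | Q' ⊆ P} with hD
  have hDfin : D.Finite := by
    apply Set.Finite.subset (finite_between (hF Q' hQ').1 hQ)
    rintro P ⟨hPF, hsub⟩
    exact ⟨(hF P hPF).1, hsub, (hF P hPF).2⟩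
  have hne : D.Nonempty := ⟨Q', hQ', subset_rfl⟩
  obtain ⟨P, hPD, hmax⟩ := Set.Finite.exists_maximalFor id D hDfin hne
  refine ⟨P, hPD.1, hPD.2, fun R hRF hPR => ?_⟩
  exact le_antisymm hPR (hmax ⟨hRF, hPD.2.trans hPR⟩ hPR)

lemma countable_dyadic {n : ℕ} : {P : Set (Fin n → ℝ) | IsDyadicCube P}.Countable := by
  have : {P : Set (Fin n → ℝ) | IsDyadicCube P} ⊆
      Set.range (fun km : ℤ × (Fin n → ℤ) => dyadicCube n km.1 km.2) := by
    rintro P ⟨k, m, rfl⟩; exact ⟨(k, m), rfl⟩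
  exact (Set.countable_range _).mono this

lemma exists_layer {x : ℝ≥0∞} (h1 : 1 ≤ x) (hx : x ≠ ∞) :
    ∃ m : ℕ, (2:ℝ≥0∞) ^ m ≤ x ∧ x < 2 ^ (m+1) := by
  set r := x.toReal with hr
  have hr1 : 1 ≤ r := by
    have := ENNReal.toReal_mono hx h1
    simpa using this
  have hfl : 1 ≤ ⌊r⌋₊ := Nat.le_floor (by exact_mod_cast hr1)
  set m := Nat.log 2 ⌊r⌋₊ with hm
  have hlow : 2 ^ m ≤ ⌊r⌋₊ := Nat.pow_log_le_self 2 (by omega)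
  have hhigh : ⌊r⌋₊ < 2 ^ (m+1) := Nat.lt_pow_succ_log_self (by norm_num) _
  have hlowR : (2:ℝ) ^ m ≤ r := by
    calc ((2:ℝ)) ^ m = ((2 ^ m : ℕ) : ℝ) := by push_cast; ring
      _ ≤ (⌊r⌋₊ : ℝ) := by exact_mod_cast hlow
      _ ≤ r := Nat.floor_le (by linarith)
  have hhighR : r < (2:ℝ) ^ (m+1) := by
    calc r < (⌊r⌋₊ : ℝ) + 1 := Nat.lt_floor_add_one r
      _ ≤ ((2 ^ (m+1) : ℕ) : ℝ) := by exact_mod_cast hhigh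
      _ = (2:ℝ) ^ (m+1) := by push_cast; ring
  refine ⟨m, ?_, ?_⟩
  · have : x = ENNReal.ofReal r := (ENNReal.ofReal_toReal hx).symm
    rw [this]
    calc (2:ℝ≥0∞) ^ m = ENNReal.ofReal ((2:ℝ) ^ m) := by
          rw [ENNReal.ofReal_pow (by norm_num)]; norm_num
      _ ≤ ENNReal.ofReal r := ENNReal.ofReal_le_ofReal hlowR
  · have : x = ENNReal.ofReal r := (ENNReal.ofReal_toReal hx).symm
    rw [this]
    calc ENNReal.ofReal r < ENNReal.ofReal ((2:ℝ) ^ (m+1)) :=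
          ENNReal.ofReal_lt_ofReal_iff (by positivity) |>.2 hhighR
      _ = (2:ℝ≥0∞) ^ (m+1) := by
          rw [ENNReal.ofReal_pow (by norm_num)]; norm_num

end Aux

namespace Aux

lemma sum_pow_le (N : ℕ) : ∑ m ∈ Finset.range N, (2:ℝ≥0∞) ^ m ≤ 2 ^ N := by
  induction N with
  | zero => simp
  | succ N ih =>
    rw [Finset.sum_range_succ, pow_succ, mul_two]
    exact add_le_add ih le_rfl

end Aux
set_option maxHeartbeats 2000000 in
theorem statement8 (eta : ℝ≥0∞) (heta0 : 0 < eta) (heta1 : eta ≤ 1) (p : ℝ)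
    (hp : 2 ≤ p) (n : ℕ) :
    ∃ C : ℝ≥0∞, C < ∞ ∧
      ∀ (w σ : (Fin n → ℝ) → ℝ≥0∞), Measurable w → Measurable σ →
      ∀ (S : Set (Set (Fin n → ℝ))), IsSparse eta S →
      (∀ Q' ∈ S, 1 ≤ avg σ Q') →
      (0 < ⨆ (Q' : Set (Fin n → ℝ)) (_ : Q' ∈ S), avg w Q' * (avg σ Q') ^ (p-1)) →
      (⨆ (Q' : Set (Fin n → ℝ)) (_ : Q' ∈ S), avg w Q' * (avg σ Q') ^ (p-1)) < ∞ →
      ∀ (ψ : ℝ≥0∞ → ℝ≥0∞), MonotoneOn ψ (Set.Ici 1) → (∀ t, 0 < ψ t) →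
      ∀ Q ∈ S, ∀ k : ℕ, 1 ≤ k →
      ∑' Q' : {Q' : Set (Fin n → ℝ) // Q' ∈ S ∧ Q' ⊆ Q ∧
          avg σ Q' ≤ (avg σ Q) ^ ((2:ℝ)⁻¹) ∧
          (2:ℝ≥0∞) ^ ((k:ℝ)-1) *
            (⨆ (P : Set (Fin n → ℝ)) (_ : P ∈ S), avg w P * (avg σ P) ^ (p-1)) / ψ (avg σ Q)
            < avg w Q' * (avg σ Q') ^ (p-1) ∧
          avg w Q' * (avg σ Q') ^ (p-1) ≤
            (2:ℝ≥0∞) ^ (k:ℝ) *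
              (⨆ (P : Set (Fin n → ℝ)) (_ : P ∈ S), avg w P * (avg σ P) ^ (p-1)) / ψ (avg σ Q)},
        avg σ Q'.1 * mass w Q'.1
      ≤ C * (avg σ Q) ^ ((2:ℝ)⁻¹) * mass w Q := by
  classical
  have h2ne : (2:ℝ≥0∞) ≠ 0 := two_ne_zero
  have h2t : (2:ℝ≥0∞) ≠ ∞ := ENNReal.ofNat_ne_top
  have hetat : eta ≠ ∞ := (heta1.trans_lt ENNReal.one_lt_top).ne
  have hmul : ∀ a b : ℝ, (2:ℝ≥0∞) ^ a * (2:ℝ≥0∞) ^ b = 2 ^ (a+b) :=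
    fun a b => (ENNReal.rpow_add a b h2ne h2t).symm
  refine ⟨(2:ℝ≥0∞) ^ (p+2) * eta⁻¹, ?_, ?_⟩
  · exact ENNReal.mul_lt_top (ENNReal.rpow_lt_top_of_nonneg (by linarith) h2t)
      (ENNReal.inv_lt_top.2 heta0)
  intro w σ hw hσ S hS hσ1 hA0 hAfin ψ hψmono hψpos Q hQ k hk
  obtain ⟨hdy, E, hE, hEdisj⟩ := hS
  set A := ⨆ (P : Set (Fin n → ℝ)) (_ : P ∈ S), avg w P * (avg σ P) ^ (p-1) with hA
  have hCne0 : ((2:ℝ≥0∞) ^ (p+2) * eta⁻¹) ≠ 0 :=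
    mul_ne_zero (ENNReal.rpow_pos (by norm_num) h2t).ne' (ENNReal.inv_ne_zero.2 hetat)
  have hmeasS : ∀ P ∈ S, MeasurableSet P := by
    intro P hP; obtain ⟨kk, mm, rfl⟩ := hdy P hP; exact Aux.dc_measurable kk mm
  have hvol0 : ∀ P ∈ S, volume P ≠ 0 := by
    intro P hP; obtain ⟨kk, mm, rfl⟩ := hdy P hP; exact (Aux.dc_vol_pos kk mm).ne'
  have hvolt : ∀ P ∈ S, volume P ≠ ∞ := by
    intro P hP; obtain ⟨kk, mm, rfl⟩ := hdy P hP; exact (Aux.dc_vol_lt_top kk mm).ne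
  have hsQ1 : 1 ≤ avg σ Q := hσ1 Q hQ
  have hhalf1 : 1 ≤ (avg σ Q) ^ ((2:ℝ)⁻¹) := by
    calc (1:ℝ≥0∞) = 1 ^ ((2:ℝ)⁻¹) := (ENNReal.one_rpow _).symm
      _ ≤ _ := ENNReal.rpow_le_rpow hsQ1 (by norm_num)
  by_cases hwQt : mass w Q = ∞
  · rw [hwQt, ENNReal.mul_top (mul_ne_zero hCne0
      (by intro h; rw [h] at hhalf1; simp at hhalf1))]
    exact le_top
  by_cases hwQ0 : mass w Q = 0
  · have hz : ∀ x : {Q' : Set (Fin n → ℝ) // Q' ∈ S ∧ Q' ⊆ Q ∧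
          avg σ Q' ≤ (avg σ Q) ^ ((2:ℝ)⁻¹) ∧
          (2:ℝ≥0∞) ^ ((k:ℝ)-1) * A / ψ (avg σ Q) < avg w Q' * (avg σ Q') ^ (p-1) ∧
          avg w Q' * (avg σ Q') ^ (p-1) ≤ (2:ℝ≥0∞) ^ (k:ℝ) * A / ψ (avg σ Q)},
        avg σ x.1 * mass w x.1 = 0 := by
      intro x
      have hm : mass w x.1 = 0 := by
        have h1 := lintegral_mono_set (μ := volume) (f := w) x.2.2.1
        exact le_antisymm (le_trans h1 (le_of_eq hwQ0)) zero_le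
      rw [hm, mul_zero]
    rw [ENNReal.tsum_eq_zero.2 hz]
    exact zero_le
  by_cases hsQt : avg σ Q = ∞
  · rw [hsQt, ENNReal.top_rpow_of_pos (by norm_num), ENNReal.mul_top hCne0,
      ENNReal.top_mul hwQ0]
    exact le_top
  by_cases hψt : ψ (avg σ Q) = ∞
  · have hz : ∀ x : {Q' : Set (Fin n → ℝ) // Q' ∈ S ∧ Q' ⊆ Q ∧
          avg σ Q' ≤ (avg σ Q) ^ ((2:ℝ)⁻¹) ∧
          (2:ℝ≥0∞) ^ ((k:ℝ)-1) * A / ψ (avg σ Q) < avg w Q' * (avg σ Q') ^ (p-1) ∧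
          avg w Q' * (avg σ Q') ^ (p-1) ≤ (2:ℝ≥0∞) ^ (k:ℝ) * A / ψ (avg σ Q)},
        avg σ x.1 * mass w x.1 = 0 := by
      intro x
      have h1 := lt_of_lt_of_le x.2.2.2.2.1 x.2.2.2.2.2
      rw [hψt, ENNReal.div_top, ENNReal.div_top] at h1
      exact absurd h1 (lt_irrefl 0)
    rw [ENNReal.tsum_eq_zero.2 hz]
    exact zero_le
  -- main case
  set sQh := (avg σ Q) ^ ((2:ℝ)⁻¹) with hsQh
  have hsQht : sQh ≠ ∞ := (ENNReal.rpow_lt_top_of_nonneg (by norm_num) hsQt).ne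
  set L := (2:ℝ≥0∞) ^ ((k:ℝ)-1) * A / ψ (avg σ Q) with hL
  set U := (2:ℝ≥0∞) ^ (k:ℝ) * A / ψ (avg σ Q) with hU
  have hUL : U = 2 * L := by
    have h2 : (2:ℝ≥0∞) ^ (k:ℝ) = 2 ^ ((k:ℝ)-1) * 2 := by
      calc (2:ℝ≥0∞) ^ (k:ℝ) = 2 ^ (((k:ℝ)-1)+1) := by norm_num
        _ = 2 ^ ((k:ℝ)-1) * 2 ^ (1:ℝ) := ENNReal.rpow_add _ _ h2ne h2t
        _ = 2 ^ ((k:ℝ)-1) * 2 := by rw [ENNReal.rpow_one]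
    rw [hU, hL, h2, div_eq_mul_inv, div_eq_mul_inv]
    ring
  have hLt : L ≠ ∞ := by
    refine (ENNReal.div_lt_top (ENNReal.mul_ne_top ?_ hAfin.ne) (hψpos _).ne').ne
    refine (ENNReal.rpow_lt_top_of_nonneg ?_ h2t).ne
    have : (1:ℝ) ≤ (k:ℝ) := by exact_mod_cast hk
    linarith
  have hL0 : L ≠ 0 := by
    refine (ENNReal.div_pos (mul_ne_zero ?_ hA0.ne') hψt).ne'
    exact (ENNReal.rpow_pos (by norm_num) h2t).ne'
  have hUL2 : U * L⁻¹ = (2:ℝ≥0∞) ^ (1:ℝ) := by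
    rw [hUL, mul_assoc, ENNReal.mul_inv_cancel hL0 hLt, mul_one, ENNReal.rpow_one]
  have hUt : U ≠ ∞ := by
    rw [hUL]; exact ENNReal.mul_ne_top h2t hLt
  set F : Set (Set (Fin n → ℝ)) := {Q' | Q' ∈ S ∧ Q' ⊆ Q ∧ avg σ Q' ≤ sQh ∧
      L < avg w Q' * (avg σ Q') ^ (p-1) ∧ avg w Q' * (avg σ Q') ^ (p-1) ≤ U} with hF
  have hσ'fin : ∀ Q' ∈ F, avg σ Q' ≠ ∞ := fun Q' h =>
    (lt_of_le_of_lt h.2.2.1 hsQht.lt_top).ne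
  set Fm : ℕ → Set (Set (Fin n → ℝ)) :=
    fun m => {Q' | Q' ∈ F ∧ (2:ℝ≥0∞) ^ m ≤ avg σ Q' ∧ avg σ Q' < 2 ^ (m+1)} with hFmdef
  have hcover : F ⊆ ⋃ m, Fm m := by
    intro Q' hQ'
    obtain ⟨m, h1, h2⟩ := Aux.exists_layer (hσ1 Q' hQ'.1) (hσ'fin Q' hQ')
    exact Set.mem_iUnion.2 ⟨m, hQ', h1, h2⟩
  have pow_eq : ∀ m : ℕ, (2:ℝ≥0∞) ^ (m+1) * ((2:ℝ≥0∞) ^ m) ^ ((1:ℝ)-p) *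
      ((2:ℝ≥0∞) ^ (m+1)) ^ (p-1) * (2:ℝ≥0∞) ^ (1:ℝ)
      = (2:ℝ≥0∞) ^ m * (2:ℝ≥0∞) ^ (p+1) := by
    intro m
    rw [← ENNReal.rpow_natCast 2 (m+1), ← ENNReal.rpow_natCast 2 m,
      ← ENNReal.rpow_mul, ← ENNReal.rpow_mul]
    simp only [hmul]
    congr 1
    push_cast
    ring
  -- the layer estimate
  have layer : ∀ m : ℕ, (∑' Q' : Fm m, avg σ Q'.1 * mass w Q'.1)
      ≤ (2:ℝ≥0∞) ^ m * ((2:ℝ≥0∞) ^ (p+1) * eta⁻¹ * mass w Q) := by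
    intro m
    have hc0 : ((2:ℝ≥0∞) ^ (m+1)) ^ (p-1) ≠ 0 :=
      (ENNReal.rpow_pos (ENNReal.pow_pos (by norm_num) _) (ENNReal.pow_ne_top h2t)).ne'
    have hct : ((2:ℝ≥0∞) ^ (m+1)) ^ (p-1) ≠ ∞ :=
      (ENNReal.rpow_lt_top_of_nonneg (by linarith) (ENNReal.pow_ne_top h2t)).ne
    have hTS : ∀ P ∈ Fm m, P ∈ S := fun P h => h.1.1
    have step1 : ∀ P ∈ Fm m, avg σ P * mass w P
        ≤ ((2:ℝ≥0∞) ^ (m+1) * (U * ((2:ℝ≥0∞) ^ m) ^ ((1:ℝ)-p))) * volume P := by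
      intro P hP
      have hσP1 : 1 ≤ avg σ P := hσ1 P (hTS P hP)
      have hσPt : avg σ P ≠ ∞ := hσ'fin P hP.1
      have hσP0 : avg σ P ≠ 0 := by
        intro h; rw [h] at hσP1; exact absurd hσP1 (by simp)
      have hmass : mass w P = avg w P * volume P := by
        rw [avg, ENNReal.div_mul_cancel (hvol0 P (hTS P hP)) (hvolt P (hTS P hP))]
      have havgw : avg w P ≤ U * (avg σ P) ^ ((1:ℝ)-p) := by
        have hm2 : avg w P * (avg σ P) ^ (p-1) * (avg σ P) ^ ((1:ℝ)-p)
            ≤ U * (avg σ P) ^ ((1:ℝ)-p) := mul_le_mul_left hP.1.2.2.2.2 _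
        calc avg w P = avg w P * ((avg σ P) ^ (p-1) * (avg σ P) ^ ((1:ℝ)-p)) := by
              rw [← ENNReal.rpow_add _ _ hσP0 hσPt]
              have hz : (p-1) + ((1:ℝ)-p) = 0 := by ring
              rw [hz, ENNReal.rpow_zero, mul_one]
          _ = avg w P * (avg σ P) ^ (p-1) * (avg σ P) ^ ((1:ℝ)-p) := by ring
          _ ≤ _ := hm2
      have hbase : (avg σ P) ^ ((1:ℝ)-p) ≤ ((2:ℝ≥0∞) ^ m) ^ ((1:ℝ)-p) := by
        have h1p : (1:ℝ) - p = -(p-1) := by ring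
        rw [h1p, ENNReal.rpow_neg, ENNReal.rpow_neg]
        exact ENNReal.inv_le_inv.2 (ENNReal.rpow_le_rpow hP.2.1 (by linarith))
      calc avg σ P * mass w P = avg σ P * (avg w P * volume P) := by rw [hmass]
        _ ≤ (2:ℝ≥0∞) ^ (m+1) * ((U * ((2:ℝ≥0∞) ^ m) ^ ((1:ℝ)-p)) * volume P) := by
            refine mul_le_mul' hP.2.2.le (mul_le_mul_left ?_ _)
            exact le_trans havgw (mul_le_mul_right hbase _)
        _ = _ := by ring
    have hTcount : (Fm m).Countable := by
      refine Set.Countable.mono ?_ (Aux.countable_dyadic (n := n))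
      intro P hP; exact hdy P (hTS P hP)
    have step2 : ∑' P : Fm m, volume P.1 ≤ eta⁻¹ * volume (⋃ P ∈ Fm m, P) := by
      have h1 : eta * ∑' P : Fm m, volume P.1 ≤ volume (⋃ P ∈ Fm m, E P) := by
        rw [← ENNReal.tsum_mul_left,
          measure_biUnion hTcount (hEdisj.subset (fun P hP => hTS P hP))
          (fun P hP => (hE P (hTS P hP)).2.1)]
        exact ENNReal.tsum_le_tsum fun P => (hE P.1 (hTS P.1 P.2)).2.2
      have h2 : volume (⋃ P ∈ Fm m, E P) ≤ volume (⋃ P ∈ Fm m, P) :=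
        measure_mono (Set.iUnion₂_mono fun P hP => (hE P (hTS P hP)).1)
      have h3 := le_trans h1 h2
      rw [mul_comm, ← ENNReal.le_div_iff_mul_le (Or.inl heta0.ne') (Or.inl hetat)] at h3
      rwa [div_eq_mul_inv, mul_comm] at h3
    set G : Set (Set (Fin n → ℝ)) := {P | P ∈ Fm m ∧ ∀ R ∈ Fm m, P ⊆ R → P = R} with hG
    have hGS : ∀ P ∈ G, P ∈ S := fun P h => hTS P h.1
    have hGcount : G.Countable := hTcount.mono fun P hP => hP.1
    have hTQ : ∀ P ∈ Fm m, IsDyadicCube P ∧ P ⊆ Q :=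
      fun P h => ⟨hdy P (hTS P h), h.1.2.1⟩
    have hmaxex : ∀ P ∈ Fm m, ∃ R ∈ G, P ⊆ R := by
      intro P hP
      obtain ⟨R, hRT, hPR, hmax⟩ := Aux.exists_maximal (hdy Q hQ) hTQ hP
      exact ⟨R, ⟨hRT, hmax⟩, hPR⟩
    have hGdisj : G.PairwiseDisjoint id := by
      intro P1 h1 P2 h2 hne12
      rw [Function.onFun]
      by_contra hnd
      obtain ⟨x, hx1, hx2⟩ := Set.not_disjoint_iff.1 hnd
      rcases Aux.nested_or_nested (hdy P1 (hGS P1 h1)) (hdy P2 (hGS P2 h2)) ⟨x, hx1, hx2⟩ with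
        hsub | hsub
      · exact hne12 (h1.2 P2 h2.1 hsub)
      · exact hne12 ((h2.2 P1 h1.1 hsub).symm)
    have step3 : volume (⋃ P ∈ Fm m, P) ≤ ∑' P : G, volume P.1 := by
      refine le_trans (measure_mono ?_) (measure_biUnion_le volume hGcount (fun P => P))
      intro x hx
      obtain ⟨P, hPT, hxP⟩ := Set.mem_iUnion₂.1 hx
      obtain ⟨R, hRG, hPR⟩ := hmaxex P hPT
      exact Set.mem_iUnion₂.2 ⟨R, hRG, hPR hxP⟩
    have step4 : ∀ P ∈ G, volume P
        ≤ mass w P / (L / ((2:ℝ≥0∞) ^ (m+1)) ^ (p-1)) := by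
      intro P hPG
      have hPT := hPG.1
      have hLc0 : L / ((2:ℝ≥0∞) ^ (m+1)) ^ (p-1) ≠ 0 := (ENNReal.div_pos hL0 hct).ne'
      have hLct : L / ((2:ℝ≥0∞) ^ (m+1)) ^ (p-1) ≠ ∞ := (ENNReal.div_lt_top hLt hc0).ne
      have hσPle : (avg σ P) ^ (p-1) ≤ ((2:ℝ≥0∞) ^ (m+1)) ^ (p-1) :=
        ENNReal.rpow_le_rpow hPT.2.2.le (by linarith)
      have hlow : L ≤ avg w P * ((2:ℝ≥0∞) ^ (m+1)) ^ (p-1) :=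
        le_trans hPT.1.2.2.2.1.le (mul_le_mul_right hσPle _)
      have havgP : L / ((2:ℝ≥0∞) ^ (m+1)) ^ (p-1) ≤ avg w P := by
        rw [ENNReal.div_le_iff_le_mul (Or.inl hc0) (Or.inl hct)]
        exact hlow
      have hmass : volume P * avg w P = mass w P := by
        rw [avg, mul_comm, ENNReal.div_mul_cancel (hvol0 P (hGS P hPG)) (hvolt P (hGS P hPG))]
      have hkey : volume P * (L / ((2:ℝ≥0∞) ^ (m+1)) ^ (p-1)) ≤ mass w P := by
        rw [← hmass]
        exact mul_le_mul_right havgP _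
      rw [ENNReal.le_div_iff_mul_le (Or.inl hLc0) (Or.inl hLct)]
      exact hkey
    have step5 : ∑' P : G, mass w P.1 ≤ mass w Q := by
      calc ∑' P : G, mass w P.1 = ∑' P : G, (volume.withDensity w) P.1 :=
            tsum_congr fun P => (withDensity_apply w (hmeasS P.1 (hGS P.1 P.2))).symm
        _ = (volume.withDensity w) (⋃ P ∈ G, P) :=
            (measure_biUnion hGcount hGdisj (fun P hP => hmeasS P (hGS P hP))).symm
        _ ≤ (volume.withDensity w) Q :=
            measure_mono (Set.iUnion₂_subset fun P hP => (hTQ P hP.1).2)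
        _ = mass w Q := withDensity_apply w (hmeasS Q hQ)
    have t1 : ∑' Q' : Fm m, avg σ Q'.1 * mass w Q'.1
        ≤ ∑' Q' : Fm m, ((2:ℝ≥0∞) ^ (m+1) * (U * ((2:ℝ≥0∞) ^ m) ^ ((1:ℝ)-p))) * volume Q'.1 :=
      ENNReal.tsum_le_tsum fun P => step1 P.1 P.2
    have t2 : ∑' Q' : Fm m, ((2:ℝ≥0∞) ^ (m+1) * (U * ((2:ℝ≥0∞) ^ m) ^ ((1:ℝ)-p))) * volume Q'.1
        = ((2:ℝ≥0∞) ^ (m+1) * (U * ((2:ℝ≥0∞) ^ m) ^ ((1:ℝ)-p))) * ∑' Q' : Fm m, volume Q'.1 :=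
      ENNReal.tsum_mul_left
    have t3 : ∑' Q' : Fm m, volume Q'.1 ≤ eta⁻¹ * ∑' P : G, volume P.1 :=
      le_trans step2 (mul_le_mul_right step3 _)
    have t4 : ∑' P : G, volume P.1
        ≤ ∑' P : G, (mass w P.1 / (L / ((2:ℝ≥0∞) ^ (m+1)) ^ (p-1))) :=
      ENNReal.tsum_le_tsum fun P => step4 P.1 P.2
    have t5 : ∑' P : G, (mass w P.1 / (L / ((2:ℝ≥0∞) ^ (m+1)) ^ (p-1)))
        = (∑' P : G, mass w P.1) * (L / ((2:ℝ≥0∞) ^ (m+1)) ^ (p-1))⁻¹ := by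
      simp only [div_eq_mul_inv]
      exact ENNReal.tsum_mul_right
    have t6 : ∑' Q' : Fm m, volume Q'.1
        ≤ eta⁻¹ * (mass w Q * (L / ((2:ℝ≥0∞) ^ (m+1)) ^ (p-1))⁻¹) := by
      refine le_trans t3 (mul_le_mul_right ?_ _)
      refine le_trans t4 (le_trans (le_of_eq t5) ?_)
      exact mul_le_mul_left step5 _
    have t7 : ((2:ℝ≥0∞) ^ (m+1) * (U * ((2:ℝ≥0∞) ^ m) ^ ((1:ℝ)-p))) *
          (eta⁻¹ * (mass w Q * (L / ((2:ℝ≥0∞) ^ (m+1)) ^ (p-1))⁻¹))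
        = ((2:ℝ≥0∞) ^ (m+1) * ((2:ℝ≥0∞) ^ m) ^ ((1:ℝ)-p) *
          ((2:ℝ≥0∞) ^ (m+1)) ^ (p-1) * (U * L⁻¹)) * (eta⁻¹ * mass w Q) := by
      rw [ENNReal.inv_div (Or.inl hct) (Or.inl hc0), div_eq_mul_inv]
      ring
    have t8 : ((2:ℝ≥0∞) ^ (m+1) * ((2:ℝ≥0∞) ^ m) ^ ((1:ℝ)-p) *
          ((2:ℝ≥0∞) ^ (m+1)) ^ (p-1) * (U * L⁻¹)) * (eta⁻¹ * mass w Q)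
        = (2:ℝ≥0∞) ^ m * ((2:ℝ≥0∞) ^ (p+1) * eta⁻¹ * mass w Q) := by
      rw [hUL2, pow_eq m]
      ring
    calc ∑' Q' : Fm m, avg σ Q'.1 * mass w Q'.1
        ≤ ((2:ℝ≥0∞) ^ (m+1) * (U * ((2:ℝ≥0∞) ^ m) ^ ((1:ℝ)-p))) * ∑' Q' : Fm m, volume Q'.1 :=
          le_trans t1 (le_of_eq t2)
      _ ≤ ((2:ℝ≥0∞) ^ (m+1) * (U * ((2:ℝ≥0∞) ^ m) ^ ((1:ℝ)-p))) *
          (eta⁻¹ * (mass w Q * (L / ((2:ℝ≥0∞) ^ (m+1)) ^ (p-1))⁻¹)) := mul_le_mul_right t6 _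
      _ = (2:ℝ≥0∞) ^ m * ((2:ℝ≥0∞) ^ (p+1) * eta⁻¹ * mass w Q) := t7.trans t8
  -- summing the layers
  obtain ⟨M, hM1, hM2⟩ := Aux.exists_layer hhalf1 hsQht
  have bound_m : ∀ m : ℕ, (∑' Q' : Fm m, avg σ Q'.1 * mass w Q'.1)
      ≤ (if (2:ℝ≥0∞) ^ m ≤ sQh then
          (2:ℝ≥0∞) ^ m * ((2:ℝ≥0∞) ^ (p+1) * eta⁻¹ * mass w Q) else 0) := by
    intro m
    by_cases hcond : (2:ℝ≥0∞) ^ m ≤ sQh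
    · rw [if_pos hcond]; exact layer m
    · rw [if_neg hcond]
      refine le_of_eq (ENNReal.tsum_eq_zero.2 ?_)
      intro x
      exact absurd (le_trans x.2.2.1 x.2.1.2.2.1) hcond
  have final : ∑' Q' : F, avg σ Q'.1 * mass w Q'.1
      ≤ (2:ℝ≥0∞) ^ (p+2) * eta⁻¹ * sQh * mass w Q := by
    calc ∑' Q' : F, avg σ Q'.1 * mass w Q'.1
        ≤ ∑' Q' : (⋃ m, Fm m), avg σ Q'.1 * mass w Q'.1 :=
          ENNReal.tsum_mono_subtype (fun P => avg σ P * mass w P) hcover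
      _ ≤ ∑' m, ∑' Q' : Fm m, avg σ Q'.1 * mass w Q'.1 :=
          ENNReal.tsum_iUnion_le_tsum (fun P => avg σ P * mass w P) Fm
      _ ≤ ∑' m, (if (2:ℝ≥0∞) ^ m ≤ sQh then
          (2:ℝ≥0∞) ^ m * ((2:ℝ≥0∞) ^ (p+1) * eta⁻¹ * mass w Q) else 0) :=
          ENNReal.tsum_le_tsum bound_m
      _ = ∑ m ∈ Finset.range (M+1), (if (2:ℝ≥0∞) ^ m ≤ sQh then
          (2:ℝ≥0∞) ^ m * ((2:ℝ≥0∞) ^ (p+1) * eta⁻¹ * mass w Q) else 0) := by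
          refine tsum_eq_sum ?_
          intro m hm
          rw [if_neg]
          intro hcond
          have hMm : M + 1 ≤ m := by
            by_contra hlt
            exact hm (Finset.mem_range.2 (by omega))
          have : (2:ℝ≥0∞) ^ (M+1) ≤ 2 ^ m := pow_le_pow_right' one_le_two hMm
          exact absurd (lt_of_le_of_lt (le_trans this hcond) hM2) (lt_irrefl _)
      _ ≤ ∑ m ∈ Finset.range (M+1),
          (2:ℝ≥0∞) ^ m * ((2:ℝ≥0∞) ^ (p+1) * eta⁻¹ * mass w Q) := by
          refine Finset.sum_le_sum ?_
          intro m _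
          split
          · exact le_rfl
          · exact zero_le
      _ = (∑ m ∈ Finset.range (M+1), (2:ℝ≥0∞) ^ m) *
          ((2:ℝ≥0∞) ^ (p+1) * eta⁻¹ * mass w Q) := by rw [Finset.sum_mul]
      _ ≤ (2:ℝ≥0∞) ^ (M+1) * ((2:ℝ≥0∞) ^ (p+1) * eta⁻¹ * mass w Q) :=
          mul_le_mul_left (Aux.sum_pow_le (M+1)) _
      _ = 2 * ((2:ℝ≥0∞) ^ M * ((2:ℝ≥0∞) ^ (p+1) * eta⁻¹ * mass w Q)) := by
          rw [pow_succ]; ring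
      _ ≤ 2 * (sQh * ((2:ℝ≥0∞) ^ (p+1) * eta⁻¹ * mass w Q)) :=
          mul_le_mul_right (mul_le_mul_left hM1 _) _
      _ = (2:ℝ≥0∞) ^ (p+2) * eta⁻¹ * sQh * mass w Q := by
          have h : (2:ℝ≥0∞) * 2 ^ (p+1) = 2 ^ (p+2) := by
            calc (2:ℝ≥0∞) * 2 ^ (p+1) = 2 ^ (1:ℝ) * 2 ^ (p+1) := by rw [ENNReal.rpow_one]
              _ = 2 ^ ((1:ℝ)+(p+1)) := hmul 1 (p+1)
              _ = 2 ^ (p+2) := by congr 1; ring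
          calc 2 * (sQh * ((2:ℝ≥0∞) ^ (p+1) * eta⁻¹ * mass w Q))
              = (2 * (2:ℝ≥0∞) ^ (p+1)) * eta⁻¹ * sQh * mass w Q := by ring
            _ = _ := by rw [h]
  exact final
end
end
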